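/- arXiv:2601.09786 — 5 statements merged into one kernel-verified Lean document; each statement's English description precedes it below -/
import Mathlib

section
/- Let G be a Hermitian M×M matrix with positive diagonal that is diagonally dominant, i.e., g_{ii} ≥ Σ_{j≠i} |g_{ij}| for all i. Then there exists an (M(M+1)/2) × M complex matrix V with at most two non-zero entries in each row such that G = V† V. -/
open Finset

noncomputable def vrow (M : ℕ) (G : Matrix (Fin M) (Fin M) ℂ) (p : Fin M × Fin M)
    (l : Fin M) : ℂ :=
  if p.1 = p.2 then
    (if l = p.1 then
      ((Real.sqrt ((G p.1 p.1).re - ∑ j ∈ Finset.univ.erase p.1, ‖G p.1 j‖) : ℝ) : ℂ)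
    else 0)
  else if p.1 < p.2 then
    (if l = p.1 then ((Real.sqrt (‖G p.1 p.2‖) : ℝ) : ℂ)
      else if l = p.2 then G p.1 p.2 / ((Real.sqrt (‖G p.1 p.2‖) : ℝ) : ℂ)
      else 0)
  else 0

lemma vrow_support {M : ℕ} {G : Matrix (Fin M) (Fin M) ℂ} {p : Fin M × Fin M}
    {l : Fin M} (h : vrow M G p l ≠ 0) : l = p.1 ∨ l = p.2 := by
  unfold vrow at h
  split_ifs at h <;> tauto

lemma vrow_zero {M : ℕ} {G : Matrix (Fin M) (Fin M) ℂ} {p : Fin M × Fin M}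
    (h : ¬ p.1 ≤ p.2) (l : Fin M) : vrow M G p l = 0 := by
  unfold vrow
  have h1 : ¬ p.1 = p.2 := fun e => h (le_of_eq e)
  have h2 : ¬ p.1 < p.2 := fun e => h (le_of_lt e)
  simp [h1, h2]

lemma card_pairs (M : ℕ) :
    (Finset.univ.filter (fun p : Fin M × Fin M => p.1 ≤ p.2)).card = M * (M + 1) / 2 := by
  have h1 : (Finset.univ.filter (fun p : Fin M × Fin M => p.1 ≤ p.2)).card
      = ∑ i : Fin M, (Finset.Ici i).card := by
    rw [Finset.card_filter, Fintype.sum_prod_type]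
    refine Finset.sum_congr rfl fun i _ => ?_
    rw [Finset.card_eq_sum_ones, ← Finset.sum_filter]
    congr 1
    ext j
    simp
  rw [h1]
  have h2 : ∀ i : Fin M, (Finset.Ici i).card = M - i.val := fun i => Fin.card_Ici i
  simp only [h2]
  rw [Fin.sum_univ_eq_sum_range (fun k => M - k) M]
  have h3 : ∑ k ∈ Finset.range M, (M - k) = ∑ k ∈ Finset.range (M+1), (M - k) := by
    rw [Finset.sum_range_succ]
    simp
  rw [h3]
  have h4 : ∑ k ∈ Finset.range (M+1), (M - k) = ∑ k ∈ Finset.range (M+1), k := by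
    have := Finset.sum_range_reflect (fun i => i) (M+1)
    simpa using this
  rw [h4, Finset.sum_range_id]
  simp [Nat.mul_comm]


lemma sqrt_sq' (x : ℝ) (hx : 0 ≤ x) :
    ((Real.sqrt x : ℝ) : ℂ) * ((Real.sqrt x : ℝ) : ℂ) = (x : ℂ) := by
  rw [← Complex.ofReal_mul, Real.mul_self_sqrt hx]

lemma sqrt_abs_ne (g : ℂ) (hg : g ≠ 0) :
    ((Real.sqrt (‖g‖) : ℝ) : ℂ) ≠ 0 :=
  Complex.ofReal_ne_zero.mpr (Real.sqrt_ne_zero'.mpr (norm_pos_iff.mpr hg))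

lemma div_sqrt_sq (g : ℂ) :
    star (g / ((Real.sqrt (‖g‖) : ℝ) : ℂ))
      * (g / ((Real.sqrt (‖g‖) : ℝ) : ℂ)) = ((‖g‖ : ℝ) : ℂ) := by
  by_cases hg : g = 0
  · simp [hg]
  · have hrne := sqrt_abs_ne g hg
    have h0 : (‖g‖ : ℝ) ≠ 0 := (norm_pos_iff.mpr hg).ne'
    rw [star_div₀, Complex.star_def, Complex.conj_ofReal, div_mul_div_comm,
      sqrt_sq' _ (norm_nonneg g), mul_comm ((starRingEnd ℂ) g) g, Complex.mul_conj,
      Complex.normSq_eq_norm_sq]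
    rw [div_eq_iff (by exact_mod_cast h0)]
    push_cast
    ring

lemma div_sqrt_mul (g : ℂ) :
    star (g / ((Real.sqrt (‖g‖) : ℝ) : ℂ))
      * ((Real.sqrt (‖g‖) : ℝ) : ℂ) = star g := by
  by_cases hg : g = 0
  · simp [hg]
  · rw [star_div₀, Complex.star_def, Complex.conj_ofReal,
      div_mul_cancel₀ _ (sqrt_abs_ne g hg)]

lemma sqrt_mul_div (g : ℂ) :
    ((Real.sqrt (‖g‖) : ℝ) : ℂ)
      * (g / ((Real.sqrt (‖g‖) : ℝ) : ℂ)) = g := by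
  by_cases hg : g = 0
  · simp [hg]
  · rw [mul_comm, div_mul_cancel₀ _ (sqrt_abs_ne g hg)]

lemma vrow_diag {M : ℕ} (G : Matrix (Fin M) (Fin M) ℂ) (i l : Fin M) :
    vrow M G (i, i) l
      = if l = i then
          ((Real.sqrt ((G i i).re - ∑ j ∈ Finset.univ.erase i, ‖G i j‖) : ℝ) : ℂ)
        else 0 := by
  unfold vrow
  rw [if_pos rfl]

lemma vrow_lt {M : ℕ} (G : Matrix (Fin M) (Fin M) ℂ) {i j : Fin M} (h : i < j) (l : Fin M) :
    vrow M G (i, j) l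
      = if l = i then ((Real.sqrt (‖G i j‖) : ℝ) : ℂ)
        else if l = j then G i j / ((Real.sqrt (‖G i j‖) : ℝ) : ℂ)
        else 0 := by
  unfold vrow
  rw [if_neg (ne_of_lt h), if_pos h]

lemma vrow_sum (M : ℕ) (G : Matrix (Fin M) (Fin M) ℂ) (hHerm : G.IsHermitian)
    (hdom : ∀ i, ∑ j ∈ Finset.univ.erase i, ‖G i j‖ ≤ (G i i).re)
    (a b : Fin M) :
    ∑ p : Fin M × Fin M, star (vrow M G p a) * vrow M G p b = G a b := by
  classical
  set d : Fin M → ℝ :=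
    fun i => (G i i).re - ∑ j ∈ Finset.univ.erase i, ‖G i j‖ with hd
  have hd0 : ∀ i, 0 ≤ d i := fun i => sub_nonneg.2 (hdom i)
  set F : Fin M × Fin M → ℂ := fun p => star (vrow M G p a) * vrow M G p b with hF
  by_cases hab : a = b
  · subst hab
    set t : Finset (Fin M × Fin M) := ({a} ×ˢ Finset.univ) ∪ (Finset.univ ×ˢ {a}) with ht
    have hvan : ∀ p ∈ (Finset.univ : Finset (Fin M × Fin M)), p ∉ t → F p = 0 := by
      intro p _ hp
      simp only [ht, Finset.mem_union, Finset.mem_product, Finset.mem_singleton,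
        Finset.mem_univ, and_true, true_and, not_or] at hp
      have h1 : vrow M G p a = 0 := by
        by_contra h
        rcases vrow_support h with h' | h' <;> simp [h'] at hp
      simp [hF, h1]
    have hstep : ∑ p : Fin M × Fin M, F p = ∑ p ∈ t, F p :=
      (Finset.sum_subset (Finset.subset_univ t) hvan).symm
    have hinter : (({a} ×ˢ Finset.univ) ∩ (Finset.univ ×ˢ ({a} : Finset (Fin M))))
        = {((a : Fin M), a)} := by
      ext p
      simp only [Finset.mem_inter, Finset.mem_product, Finset.mem_singleton, Finset.mem_univ,
        and_true, true_and, Prod.ext_iff]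
    have hunion := Finset.sum_union_inter (s₁ := {a} ×ˢ (Finset.univ : Finset (Fin M)))
      (s₂ := (Finset.univ : Finset (Fin M)) ×ˢ {a}) (f := F)
    rw [hinter, Finset.sum_singleton] at hunion
    have h1 : ∑ p ∈ {a} ×ˢ (Finset.univ : Finset (Fin M)), F p = ∑ j : Fin M, F (a, j) := by
      rw [Finset.sum_product, Finset.sum_singleton]
    have h2 : ∑ p ∈ (Finset.univ : Finset (Fin M)) ×ˢ ({a} : Finset (Fin M)), F p
        = ∑ i : Fin M, F (i, a) := by
      rw [Finset.sum_product]
      simp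
    have hFaj : ∀ j : Fin M, F (a, j)
        = if j = a then ((d a : ℝ) : ℂ)
          else if a < j then ((‖G a j‖ : ℝ) : ℂ) else 0 := by
      intro j
      simp only [hF]
      rcases eq_or_ne j a with hja | hja
      · subst hja
        rw [vrow_diag, if_pos rfl, if_pos rfl, Complex.star_def, Complex.conj_ofReal,
          sqrt_sq' _ (hd0 j)]
      · rw [if_neg hja]
        rcases lt_or_ge a j with hlt | hle
        · rw [vrow_lt G hlt, if_pos rfl, if_pos hlt, Complex.star_def, Complex.conj_ofReal,
            sqrt_sq' _ (norm_nonneg _)]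
        · have hlt' : j < a := lt_of_le_of_ne hle hja
          rw [vrow_zero (not_le.mpr hlt') a, star_zero, zero_mul,
            if_neg (not_lt.mpr hlt'.le)]
    have hFia : ∀ i : Fin M, F (i, a)
        = if i = a then ((d a : ℝ) : ℂ)
          else if i < a then ((‖G a i‖ : ℝ) : ℂ) else 0 := by
      intro i
      simp only [hF]
      rcases eq_or_ne i a with hia | hia
      · subst hia
        rw [vrow_diag, if_pos rfl, if_pos rfl, Complex.star_def, Complex.conj_ofReal,
          sqrt_sq' _ (hd0 i)]
      · rw [if_neg hia]
        rcases lt_or_ge i a with hlt | hle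
        · have hne : ¬ (a = i) := fun h => hia h.symm
          rw [vrow_lt G hlt, if_neg hne, if_pos rfl, div_sqrt_sq, if_pos hlt]
          have habs : ‖G i a‖ = ‖G a i‖ := by
            rw [← hHerm.apply a i, Complex.star_def, Complex.norm_conj]
          rw [habs]
        · have hlt' : a < i := lt_of_le_of_ne hle (fun h => hia h.symm)
          rw [vrow_zero (not_le.mpr hlt') a, star_zero, zero_mul,
            if_neg (not_lt.mpr hlt'.le)]
    have hsum1 : ∑ j : Fin M, F (a, j)
        = ((d a : ℝ) : ℂ) + ∑ j ∈ Finset.univ.erase a,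
            (if a < j then ((‖G a j‖ : ℝ) : ℂ) else 0) := by
      rw [← Finset.add_sum_erase _ _ (Finset.mem_univ a), hFaj]
      simp only [if_pos rfl]
      congr 1
      refine Finset.sum_congr rfl fun j hj => ?_
      rw [hFaj, if_neg (Finset.mem_erase.mp hj).1]
    have hsum2 : ∑ i : Fin M, F (i, a)
        = ((d a : ℝ) : ℂ) + ∑ i ∈ Finset.univ.erase a,
            (if i < a then ((‖G a i‖ : ℝ) : ℂ) else 0) := by
      rw [← Finset.add_sum_erase _ _ (Finset.mem_univ a), hFia]
      simp only [if_pos rfl]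
      congr 1
      refine Finset.sum_congr rfl fun i hi => ?_
      rw [hFia, if_neg (Finset.mem_erase.mp hi).1]
    have hFaa : F (a, a) = ((d a : ℝ) : ℂ) := by rw [hFaj]; simp
    have hcomb : (∑ j ∈ Finset.univ.erase a,
          (if a < j then ((‖G a j‖ : ℝ) : ℂ) else 0))
        + (∑ j ∈ Finset.univ.erase a,
          (if j < a then ((‖G a j‖ : ℝ) : ℂ) else 0))
        = ∑ j ∈ Finset.univ.erase a, ((‖G a j‖ : ℝ) : ℂ) := by
      rw [← Finset.sum_add_distrib]
      refine Finset.sum_congr rfl fun j hj => ?_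
      rcases lt_trichotomy a j with h | h | h
      · rw [if_pos h, if_neg (asymm h), add_zero]
      · exact absurd h.symm (Finset.mem_erase.mp hj).1
      · rw [if_neg (asymm h), if_pos h, zero_add]
    have htotal : ∑ p ∈ t, F p = ((d a : ℝ) : ℂ)
        + ∑ j ∈ Finset.univ.erase a, ((‖G a j‖ : ℝ) : ℂ) := by
      have hx : ∑ p ∈ t, F p = (∑ j : Fin M, F (a, j)) + (∑ i : Fin M, F (i, a)) - F (a, a) := by
        rw [← h1, ← h2, ← hunion, ht]
        ring
      rw [hx, hsum1, hsum2, hFaa]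
      linear_combination hcomb
    rw [hstep, htotal]
    have hre : ((G a a).re : ℂ) = G a a := by
      have hh := hHerm.apply a a
      rw [Complex.star_def] at hh
      exact Complex.conj_eq_iff_re.mp hh
    have hfin : ((d a : ℝ) : ℂ) + ∑ j ∈ Finset.univ.erase a, ((‖G a j‖ : ℝ) : ℂ)
        = (((G a a).re : ℝ) : ℂ) := by
      rw [hd]
      push_cast
      ring
    rw [hfin, hre]
  · set t : Finset (Fin M × Fin M) := {(a, b), (b, a)} with ht
    have hvan : ∀ p ∈ (Finset.univ : Finset (Fin M × Fin M)), p ∉ t → F p = 0 := by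
      intro p _ hp
      simp only [ht, Finset.mem_insert, Finset.mem_singleton, not_or] at hp
      by_cases h1 : vrow M G p a = 0
      · simp [hF, h1]
      by_cases h2 : vrow M G p b = 0
      · simp [hF, h2]
      exfalso
      rcases vrow_support h1 with ha' | ha' <;> rcases vrow_support h2 with hb' | hb'
      · exact hab (ha'.trans hb'.symm)
      · exact hp.1 (Prod.ext ha'.symm hb'.symm)
      · exact hp.2 (Prod.ext hb'.symm ha'.symm)
      · exact hab (ha'.trans hb'.symm)
    have hstep : ∑ p : Fin M × Fin M, F p = F (a, b) + F (b, a) := by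
      rw [← Finset.sum_pair (by simp [Prod.ext_iff, hab] : ((a, b) : Fin M × Fin M) ≠ (b, a))]
      exact (Finset.sum_subset (Finset.subset_univ t) hvan).symm ▸ rfl
    rw [hstep]
    rcases lt_or_gt_of_ne hab with hlt | hlt
    · have hz : F (b, a) = 0 := by
        simp [hF, vrow_zero (p := ((b, a) : Fin M × Fin M)) (not_le.mpr hlt)]
      rw [hz, add_zero]
      have hba : ¬ (b = a) := fun h => hab h.symm
      simp only [hF]
      rw [vrow_lt G hlt, vrow_lt G hlt, if_pos rfl, if_neg hba, if_pos rfl,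
        Complex.star_def, Complex.conj_ofReal, sqrt_mul_div]
    · have hz : F (a, b) = 0 := by
        simp [hF, vrow_zero (p := ((a, b) : Fin M × Fin M)) (not_le.mpr hlt)]
      rw [hz, zero_add]
      have hba : ¬ (b = a) := fun h => hab h.symm
      simp only [hF]
      rw [vrow_lt G hlt, vrow_lt G hlt, if_neg hab, if_pos rfl, if_pos rfl,
        div_sqrt_mul, hHerm.apply a b]

theorem stmt0 (M : ℕ) (G : Matrix (Fin M) (Fin M) ℂ)
    (hHerm : G.IsHermitian)
    (hpos : ∀ i, 0 < (G i i).re)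
    (hdom : ∀ i, ∑ j ∈ Finset.univ.erase i, ‖G i j‖ ≤ (G i i).re) :
    ∃ V : Matrix (Fin (M * (M + 1) / 2)) (Fin M) ℂ,
      (∀ k, {i | V k i ≠ 0}.ncard ≤ 2) ∧ G = V.conjTranspose * V := by
  classical
  set s : Finset (Fin M × Fin M) := Finset.univ.filter (fun p => p.1 ≤ p.2) with hs
  have hcard : M * (M + 1) / 2 = s.card := (card_pairs M).symm
  let e : Fin (M * (M + 1) / 2) ≃ {x // x ∈ s} := (finCongr hcard).trans s.equivFin.symm
  refine ⟨fun k i => vrow M G (e k).1 i, ?_, ?_⟩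
  · intro k
    have hsub : {i | vrow M G (e k).1 i ≠ 0}
        ⊆ ({((e k).1).1, ((e k).1).2} : Set (Fin M)) := by
      intro i hi
      rcases vrow_support hi with h | h
      · exact Or.inl h
      · exact Or.inr h
    calc {i | vrow M G (e k).1 i ≠ 0}.ncard
        ≤ ({((e k).1).1, ((e k).1).2} : Set (Fin M)).ncard :=
          Set.ncard_le_ncard hsub (Set.toFinite _)
      _ ≤ ({((e k).1).2} : Set (Fin M)).ncard + 1 := Set.ncard_insert_le _ _
      _ ≤ 2 := by rw [Set.ncard_singleton]
  · ext a b
    erw [Matrix.mul_apply]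
    show G a b = ∑ k, star (vrow M G (e k).1 a) * vrow M G (e k).1 b
    have h1 : ∑ k : Fin (M * (M + 1) / 2),
        star (vrow M G (e k).1 a) * vrow M G (e k).1 b
        = ∑ x : {x // x ∈ s}, star (vrow M G x.1 a) * vrow M G x.1 b :=
      Equiv.sum_comp e (fun x : {x // x ∈ s} => star (vrow M G x.1 a) * vrow M G x.1 b)
    have h2 : ∑ x : {x // x ∈ s}, star (vrow M G x.1 a) * vrow M G x.1 b
        = ∑ p ∈ s, star (vrow M G p a) * vrow M G p b :=
      Finset.sum_coe_sort s (fun p => star (vrow M G p a) * vrow M G p b)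
    have h3 : ∑ p ∈ s, star (vrow M G p a) * vrow M G p b
        = ∑ p : Fin M × Fin M, star (vrow M G p a) * vrow M G p b := by
      refine Finset.sum_subset (Finset.subset_univ s) ?_
      intro p _ hp
      have hple : ¬ p.1 ≤ p.2 := by
        simpa [hs] using hp
      rw [vrow_zero hple, vrow_zero hple, star_zero, zero_mul]
    rw [h1, h2, h3, vrow_sum M G hHerm hdom a b]
end

section
/- Let A be a real symmetric positive semi-definite |X|×|X| matrix with nonneg entries, and let A^{⊗n} be its n-fold Kronecker (tensor) power indexed by X^n. Then the minimum over probability distributions P on X^n of Σ_{x,x'} P(x)P(x') A^{⊗n}_{x,x'} equals the n-th power of the minimum over probability distributions Q on X of Σ_{x,x'} Q(x)Q(x') A_{x,x'}. -/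
open Finset

lemma quad_nonneg0 {X : Type} [Fintype X] {A : Matrix X X ℝ} (hA : A.PosSemidef)
    (u : X → ℝ) : 0 ≤ ∑ x, ∑ x', u x * u x' * A x x' := by
  have h := hA.dotProduct_mulVec_nonneg u
  have : dotProduct (star u) (A.mulVec u) = ∑ x, ∑ x', u x * u x' * A x x' := by
    simp only [dotProduct, Matrix.mulVec, Pi.star_apply, star_trivial, Finset.mul_sum]
    exact Finset.sum_congr rfl fun x _ => Finset.sum_congr rfl fun x' _ => by ring
  rw [this] at h
  exact h

lemma bilin_expand {ι : Type} [Fintype ι] (W : ι → ι → ℝ) (u v : ι → ℝ) (s t : ℝ) :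
    ∑ i, ∑ j, (s * u i + t * v i) * (s * u j + t * v j) * W i j
      = s^2 * (∑ i, ∑ j, u i * u j * W i j) + s*t*(∑ i, ∑ j, u i * v j * W i j)
        + s*t*(∑ i, ∑ j, v i * u j * W i j) + t^2 * (∑ i, ∑ j, v i * v j * W i j) := by
  have h : ∀ i j : ι, (s * u i + t * v i) * (s * u j + t * v j) * W i j
      = s^2 * (u i * u j * W i j) + s*t*(u i * v j * W i j)
        + s*t*(v i * u j * W i j) + t^2 * (v i * v j * W i j) := fun i j => by ring
  simp only [h, Finset.sum_add_distrib, ← Finset.mul_sum]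

lemma cs_aux {ι : Type} [Fintype ι] (W : ι → ι → ℝ)
    (hsym : ∀ i j, W i j = W j i)
    (hpsd : ∀ u : ι → ℝ, 0 ≤ ∑ i, ∑ j, u i * u j * W i j)
    (u v : ι → ℝ) (hc : 0 < ∑ i, ∑ j, v i * v j * W i j) :
    (∑ i, ∑ j, u i * v j * W i j)^2
      ≤ (∑ i, ∑ j, u i * u j * W i j) * (∑ i, ∑ j, v i * v j * W i j) := by
  set a := ∑ i, ∑ j, u i * u j * W i j with ha
  set b := ∑ i, ∑ j, u i * v j * W i j with hb
  set c := ∑ i, ∑ j, v i * v j * W i j with hcdef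
  have hvu : ∑ i, ∑ j, v i * u j * W i j = b := by
    rw [hb, Finset.sum_comm]
    exact Finset.sum_congr rfl fun i _ => Finset.sum_congr rfl fun j _ => by
      rw [hsym j i]; ring
  have h := hpsd (fun x => c * u x + (-b) * v x)
  rw [bilin_expand W u v c (-b), hvu, ← ha, ← hcdef] at h
  nlinarith [h, hc]

lemma tensor_psd {X : Type} [Fintype X] (S : Matrix X X ℝ) (n : ℕ)
    (u : (Fin n → X) → ℝ) :
    0 ≤ ∑ x : Fin n → X, ∑ x' : Fin n → X,
        u x * u x' * ∏ ℓ, (∑ k, S k (x ℓ) * S k (x' ℓ)) := by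
  have key : ∀ x x' : Fin n → X, (∏ ℓ, ∑ k, S k (x ℓ) * S k (x' ℓ))
      = ∑ κ : Fin n → X, (∏ ℓ, S (κ ℓ) (x ℓ)) * ∏ ℓ, S (κ ℓ) (x' ℓ) := by
    intro x x'
    rw [Fintype.prod_sum (fun ℓ k => S k (x ℓ) * S k (x' ℓ))]
    exact Finset.sum_congr rfl fun κ _ => Finset.prod_mul_distrib
  have hcalc : ∑ x : Fin n → X, ∑ x' : Fin n → X,
        u x * u x' * ∏ ℓ, (∑ k, S k (x ℓ) * S k (x' ℓ))
      = ∑ κ : Fin n → X, (∑ x : Fin n → X, u x * ∏ ℓ, S (κ ℓ) (x ℓ))^2 := calc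
    ∑ x : Fin n → X, ∑ x' : Fin n → X,
        u x * u x' * ∏ ℓ, (∑ k, S k (x ℓ) * S k (x' ℓ))
      = ∑ x : Fin n → X, ∑ x' : Fin n → X, ∑ κ : Fin n → X,
          (u x * ∏ ℓ, S (κ ℓ) (x ℓ)) * (u x' * ∏ ℓ, S (κ ℓ) (x' ℓ)) := by
        refine Finset.sum_congr rfl fun x _ => Finset.sum_congr rfl fun x' _ => ?_
        rw [key, Finset.mul_sum]
        exact Finset.sum_congr rfl fun κ _ => by ring
    _ = ∑ x : Fin n → X, ∑ κ : Fin n → X,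
          (u x * ∏ ℓ, S (κ ℓ) (x ℓ)) * ∑ x' : Fin n → X, (u x' * ∏ ℓ, S (κ ℓ) (x' ℓ)) := by
        refine Finset.sum_congr rfl fun x _ => ?_
        rw [Finset.sum_comm]
        exact Finset.sum_congr rfl fun κ _ => (Finset.mul_sum _ _ _).symm
    _ = ∑ κ : Fin n → X, (∑ x : Fin n → X, u x * ∏ ℓ, S (κ ℓ) (x ℓ))
          * ∑ x' : Fin n → X, (u x' * ∏ ℓ, S (κ ℓ) (x' ℓ)) := by
        rw [Finset.sum_comm]
        exact Finset.sum_congr rfl fun κ _ => (Finset.sum_mul _ _ _).symm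
    _ = ∑ κ : Fin n → X, (∑ x : Fin n → X, u x * ∏ ℓ, S (κ ℓ) (x ℓ))^2 :=
        Finset.sum_congr rfl fun κ _ => (sq _).symm
  rw [hcalc]
  exact Finset.sum_nonneg fun κ _ => sq_nonneg _

open scoped MatrixOrder in
lemma tensor_form_nonneg {X : Type} [Fintype X] {A : Matrix X X ℝ} (hA : A.PosSemidef)
    (n : ℕ) (u : (Fin n → X) → ℝ) :
    0 ≤ ∑ x : Fin n → X, ∑ x' : Fin n → X, u x * u x' * ∏ ℓ, A (x ℓ) (x' ℓ) := by
  classical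
  have hdec : ∀ a b, A a b = ∑ k, CFC.sqrt A k a * CFC.sqrt A k b := by
    intro a b
    conv_lhs => rw [← CFC.sqrt_mul_sqrt_self A hA.nonneg]
    rw [Matrix.mul_apply]
    refine Finset.sum_congr rfl fun k _ => ?_
    rw [← (Matrix.nonneg_iff_posSemidef.mp (CFC.sqrt_nonneg A)).1.apply k a]
    simp
  simp_rw [hdec]
  exact tensor_psd _ n u

lemma tensor_sum {X : Type} [Fintype X] (n : ℕ) (F : X → X → ℝ) :
    ∑ x : Fin n → X, ∑ x' : Fin n → X, ∏ ℓ, F (x ℓ) (x' ℓ) = (∑ a, ∑ b, F a b)^n := by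
  rw [← Fintype.sum_prod_type' (f := fun a b => F a b)]
  rw [Fintype.sum_pow]
  rw [← Fintype.sum_prod_type' (f := fun (x x' : Fin n → X) => ∏ ℓ, F (x ℓ) (x' ℓ))]
  exact Fintype.sum_equiv (Equiv.arrowProdEquivProdArrow (Fin n) (fun _ => X) (fun _ => X)).symm _ _
    (fun q => rfl)

lemma exists_min_simplex {X : Type} [Fintype X] [Nonempty X] (A : Matrix X X ℝ) :
    ∃ Q : X → ℝ, (∀ x, 0 ≤ Q x) ∧ ∑ x, Q x = 1 ∧
      ∀ Q' : X → ℝ, (∀ x, 0 ≤ Q' x) → ∑ x, Q' x = 1 →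
        (∑ x, ∑ x', Q x * Q x' * A x x') ≤ ∑ x, ∑ x', Q' x * Q' x' * A x x' := by
  classical
  set K : Set (X → ℝ) := {Q | (∀ x, 0 ≤ Q x) ∧ ∑ x, Q x = 1} with hK
  have hKne : K.Nonempty := by
    refine ⟨fun _ => (Fintype.card X : ℝ)⁻¹, fun x => by positivity, ?_⟩
    simp [Finset.sum_const, Finset.card_univ]
  have hKclosed : IsClosed K := by
    have : K = (⋂ x, {Q : X → ℝ | 0 ≤ Q x}) ∩ {Q : X → ℝ | ∑ x, Q x = 1} := by
      ext Q; simp [hK, Set.mem_iInter, forall_and]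
    rw [this]
    exact IsClosed.inter
      (isClosed_iInter fun x => isClosed_le continuous_const (continuous_apply x))
      (isClosed_eq (continuous_finset_sum _ fun i _ => continuous_apply i) continuous_const)
  have hKcomp : IsCompact K := by
    refine IsCompact.of_isClosed_subset
      (isCompact_univ_pi fun _ => isCompact_Icc (a := (0:ℝ)) (b := 1)) hKclosed ?_
    intro Q hQ
    rw [Set.mem_univ_pi]
    intro x
    refine ⟨hQ.1 x, ?_⟩
    calc Q x ≤ ∑ y, Q y := Finset.single_le_sum (fun y _ => hQ.1 y) (Finset.mem_univ x)
    _ = 1 := hQ.2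
  have hgcont : Continuous (fun Q : X → ℝ => ∑ x, ∑ x', Q x * Q x' * A x x') := by
    apply continuous_finset_sum; intro x _
    apply continuous_finset_sum; intro x' _
    exact ((continuous_apply x).mul (continuous_apply x')).mul continuous_const
  obtain ⟨Q, hQK, hQmin⟩ := hKcomp.exists_isMinOn hKne hgcont.continuousOn
  exact ⟨Q, hQK.1, hQK.2, fun Q' h0 h1 => isMinOn_iff.mp hQmin Q' ⟨h0, h1⟩⟩

lemma kkt_min {X : Type} [Fintype X] (A : Matrix X X ℝ)
    (hsym : ∀ a b, A a b = A b a)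
    (Q : X → ℝ) (hQ0 : ∀ x, 0 ≤ Q x) (hQ1 : ∑ x, Q x = 1)
    (hmin : ∀ Q' : X → ℝ, (∀ x, 0 ≤ Q' x) → ∑ x, Q' x = 1 →
        (∑ x, ∑ x', Q x * Q x' * A x x') ≤ ∑ x, ∑ x', Q' x * Q' x' * A x x')
    (x0 : X) : (∑ x, ∑ x', Q x * Q x' * A x x') ≤ ∑ b, A x0 b * Q b := by
  classical
  set lam := ∑ x, ∑ x', Q x * Q x' * A x x' with hlam
  set w := ∑ b, A x0 b * Q b with hw
  set δ : X → ℝ := fun b => if b = x0 then 1 else 0 with hδ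
  have hδ0 : ∀ x, 0 ≤ δ x := fun x => by by_cases h : x = x0 <;> simp [hδ, h]
  have hδ1 : ∑ x, δ x = 1 := by simp [hδ]
  have huv : ∑ i, ∑ j, Q i * δ j * A i j = w := by
    have : ∀ i, ∑ j, Q i * δ j * A i j = Q i * A i x0 := by
      intro i
      simp [hδ, mul_ite, ite_mul, mul_one, mul_zero, zero_mul, Finset.sum_ite_eq']
    rw [Finset.sum_congr rfl fun i _ => this i, hw]
    exact Finset.sum_congr rfl fun i _ => by rw [hsym i x0]; ring
  have hvu : ∑ i, ∑ j, δ i * Q j * A i j = w := by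
    have : ∀ i, ∑ j, δ i * Q j * A i j = δ i * ∑ j, Q j * A i j := by
      intro i; rw [Finset.mul_sum]; exact Finset.sum_congr rfl fun j _ => by ring
    rw [Finset.sum_congr rfl fun i _ => this i]
    simp [hδ, ite_mul, zero_mul, Finset.sum_ite_eq', hw]
    exact Finset.sum_congr rfl fun j _ => by ring
  have hddval : ∑ i, ∑ j, δ i * δ j * A i j = A x0 x0 := by
    simp [hδ, ite_mul, zero_mul, mul_ite, mul_zero, Finset.sum_ite_eq', one_mul]
  set d := A x0 x0 with hd
  have key : ∀ t : ℝ, 0 ≤ t → t ≤ 1 →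
      lam ≤ (1-t)^2 * lam + (1-t)*t*w + (1-t)*t*w + t^2 * d := by
    intro t ht0 ht1
    have hmem0 : ∀ x, 0 ≤ (1-t) * Q x + t * δ x := fun x =>
      add_nonneg (mul_nonneg (by linarith) (hQ0 x)) (mul_nonneg ht0 (hδ0 x))
    have hmem1 : ∑ x, ((1-t) * Q x + t * δ x) = 1 := by
      rw [Finset.sum_add_distrib, ← Finset.mul_sum, ← Finset.mul_sum, hQ1, hδ1]; ring
    have h2 := hmin _ hmem0 hmem1
    rw [bilin_expand A Q δ (1-t) t, huv, hvu, hddval] at h2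
    exact h2
  by_contra hcon
  push_neg at hcon
  set ε := lam - w with hε
  have hεpos : 0 < ε := by simp [hε]; linarith
  set c0 := lam - 2*w + d with hc0
  set t := min 1 (ε/(|c0|+1)) with ht
  have habs : 0 < |c0| + 1 := by positivity
  have ht0 : 0 < t := lt_min one_pos (div_pos hεpos habs)
  have ht1 : t ≤ 1 := min_le_left _ _
  have ht2 : t * (|c0|+1) ≤ ε := by
    rw [← le_div_iff₀ habs]; exact min_le_right _ _
  have hk := key t ht0.le ht1
  have hc0abs : c0 ≤ |c0| := le_abs_self _
  nlinarith [hk, ht0, hεpos, hc0abs, ht2, mul_le_mul_of_nonneg_left hc0abs ht0.le]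

theorem stmt3 (X : Type) [Fintype X] [Nonempty X] (A : Matrix X X ℝ)
    (hA : A.PosSemidef) (hnn : ∀ x x', 0 ≤ A x x') (n : ℕ) :
    sInf {v : ℝ | ∃ P : (Fin n → X) → ℝ, (∀ x, 0 ≤ P x) ∧ ∑ x, P x = 1 ∧
        v = ∑ x, ∑ x', P x * P x' * ∏ ℓ, A (x ℓ) (x' ℓ)}
      = (sInf {v : ℝ | ∃ Q : X → ℝ, (∀ x, 0 ≤ Q x) ∧ ∑ x, Q x = 1 ∧
        v = ∑ x, ∑ x', Q x * Q x' * A x x'}) ^ n := by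
  classical
  obtain ⟨Q, hQ0, hQ1, hQmin⟩ := exists_min_simplex A
  set lam := ∑ x, ∑ x', Q x * Q x' * A x x' with hlam
  have hsymA : ∀ a b, A a b = A b a := by
    intro a b
    simpa using hA.1.apply b a
  have hRHS : sInf {v : ℝ | ∃ Q : X → ℝ, (∀ x, 0 ≤ Q x) ∧ ∑ x, Q x = 1 ∧
      v = ∑ x, ∑ x', Q x * Q x' * A x x'} = lam := by
    apply le_antisymm
    · refine csInf_le ⟨0, ?_⟩ ⟨Q, hQ0, hQ1, rfl⟩
      rintro v ⟨Q', h0, h1, rfl⟩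
      exact quad_nonneg0 hA Q'
    · refine le_csInf ⟨lam, Q, hQ0, hQ1, rfl⟩ ?_
      rintro v ⟨Q', h0, h1, rfl⟩
      exact hQmin Q' h0 h1
  rw [hRHS]
  rcases Nat.eq_zero_or_pos n with hn | hn
  · subst hn
    rw [pow_zero]
    have hset : {v : ℝ | ∃ P : (Fin 0 → X) → ℝ, (∀ x, 0 ≤ P x) ∧ ∑ x, P x = 1 ∧
        v = ∑ x, ∑ x', P x * P x' * ∏ ℓ, A (x ℓ) (x' ℓ)} = {1} := by
      ext v
      simp only [Set.mem_setOf_eq, Set.mem_singleton_iff]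
      constructor
      · rintro ⟨P, hP0, hP1, rfl⟩
        simp only [Finset.univ_eq_empty (α := Fin 0), Finset.prod_empty, mul_one]
        rw [← Finset.sum_mul_sum, hP1, one_mul]
      · rintro rfl
        refine ⟨fun _ => 1, fun _ => zero_le_one, by simp, by simp⟩
    rw [hset, csInf_singleton]
  -- main case n ≥ 1 (the ≤ direction works for all n)
  have hlam0 : 0 ≤ lam := quad_nonneg0 hA Q
  have hprodval : ∑ x : Fin n → X, ∑ x' : Fin n → X,
      (∏ ℓ, Q (x ℓ)) * (∏ ℓ, Q (x' ℓ)) * ∏ ℓ, A (x ℓ) (x' ℓ) = lam ^ n := by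
    have h1 : ∀ x x' : Fin n → X,
        (∏ ℓ, Q (x ℓ)) * (∏ ℓ, Q (x' ℓ)) * ∏ ℓ, A (x ℓ) (x' ℓ)
          = ∏ ℓ, (Q (x ℓ) * Q (x' ℓ) * A (x ℓ) (x' ℓ)) := fun x x' => by
      rw [← Finset.prod_mul_distrib, ← Finset.prod_mul_distrib]
    rw [Finset.sum_congr rfl fun x _ => Finset.sum_congr rfl fun x' _ => h1 x x']
    rw [tensor_sum n (fun a b => Q a * Q b * A a b)]
  have hmem : lam ^ n ∈ {v : ℝ | ∃ P : (Fin n → X) → ℝ, (∀ x, 0 ≤ P x) ∧ ∑ x, P x = 1 ∧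
      v = ∑ x, ∑ x', P x * P x' * ∏ ℓ, A (x ℓ) (x' ℓ)} := by
    refine ⟨fun x => ∏ ℓ, Q (x ℓ), fun x => Finset.prod_nonneg fun ℓ _ => hQ0 _, ?_, hprodval.symm⟩
    rw [← Fintype.prod_sum (fun (ℓ : Fin n) (j : X) => Q j)]
    simp [hQ1]
  apply le_antisymm
  · refine csInf_le ⟨0, ?_⟩ hmem
    rintro v ⟨P, hP0, hP1, rfl⟩
    exact tensor_form_nonneg hA n P
  · refine le_csInf ⟨lam ^ n, hmem⟩ ?_
    rintro v ⟨P, hP0, hP1, rfl⟩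
    rcases hlam0.eq_or_lt with h0 | hpos
    · rw [← h0, zero_pow hn.ne']
      exact tensor_form_nonneg hA n P
    · set W : (Fin n → X) → (Fin n → X) → ℝ := fun x x' => ∏ ℓ, A (x ℓ) (x' ℓ) with hW
      set vv : (Fin n → X) → ℝ := fun x => ∏ ℓ, Q (x ℓ) with hv
      have hwx : ∀ a : X, lam ≤ ∑ b, A a b * Q b := kkt_min A hsymA Q hQ0 hQ1 hQmin
      have hBvv : ∑ x, ∑ x', vv x * vv x' * W x x' = lam ^ n := hprodval
      have hBuv : ∑ x, ∑ x', P x * vv x' * W x x'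
          = ∑ x, P x * ∏ ℓ, (∑ b, A (x ℓ) b * Q b) := by
        refine Finset.sum_congr rfl fun x _ => ?_
        have h1 : ∀ x', P x * vv x' * W x x'
            = P x * ∏ ℓ, (Q (x' ℓ) * A (x ℓ) (x' ℓ)) := fun x' => by
          rw [hv, hW, mul_assoc, ← Finset.prod_mul_distrib]
        rw [Finset.sum_congr rfl fun x' _ => h1 x', ← Finset.mul_sum]
        congr 1
        rw [← Fintype.prod_sum (fun (ℓ : Fin n) (b : X) => Q b * A (x ℓ) b)]
        exact Finset.prod_congr rfl fun ℓ _ => Finset.sum_congr rfl fun b _ => mul_comm _ _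
      have hBuvge : lam ^ n ≤ ∑ x, ∑ x', P x * vv x' * W x x' := by
        rw [hBuv]
        calc lam ^ n = ∑ x : Fin n → X, P x * lam ^ n := by
              rw [← Finset.sum_mul, hP1, one_mul]
        _ ≤ ∑ x, P x * ∏ ℓ, (∑ b, A (x ℓ) b * Q b) := by
              refine Finset.sum_le_sum fun x _ => mul_le_mul_of_nonneg_left ?_ (hP0 x)
              calc lam ^ n = ∏ _ℓ : Fin n, lam := by
                    rw [Finset.prod_const, Finset.card_univ, Fintype.card_fin]
              _ ≤ _ := Finset.prod_le_prod (fun ℓ _ => hlam0) (fun ℓ _ => hwx (x ℓ))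
      have hWsym : ∀ x x', W x x' = W x' x := fun x x' =>
        Finset.prod_congr rfl fun ℓ _ => hsymA _ _
      have hWpsd : ∀ u : (Fin n → X) → ℝ, 0 ≤ ∑ x, ∑ x', u x * u x' * W x x' := fun u =>
        tensor_form_nonneg hA n u
      have hcs := cs_aux W hWsym hWpsd P vv (by rw [hBvv]; exact pow_pos hpos n)
      nlinarith [hcs, hBuvge, pow_pos hpos n, hBvv]
end

section
/- Let ρ be a density matrix (positive semi-definite, trace one) and F a positive semi-definite operator with F ≤ 1 (i.e., 1 − F is positive semi-definite) on a finite-dimensional Hilbert space, such that Tr[ρF] = 1. Then F ≥ Π_ρ, where Π_ρ is the orthogonal projector onto the support of ρ. -/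
open scoped ComplexOrder
open Matrix

lemma aux_trace_zero {n : ℕ} (M : Matrix (Fin n) (Fin n) ℂ)
    (h : (Mᴴ * M).trace = 0) : M = 0 := by
  have h' : ∑ i, ∑ j, ((Complex.normSq (M j i) : ℝ) : ℂ) = 0 := by
    simpa [Matrix.trace, Matrix.diag, Matrix.mul_apply, Matrix.conjTranspose_apply,
      Complex.normSq_eq_conj_mul_self] using h
  have h'' : ∑ i, ∑ j, Complex.normSq (M j i) = 0 := by
    exact_mod_cast h'
  ext j i
  have hnn : ∀ i ∈ (Finset.univ : Finset (Fin n)),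
      (0:ℝ) ≤ ∑ j, Complex.normSq (M j i) := fun i _ =>
    Finset.sum_nonneg fun j _ => Complex.normSq_nonneg _
  have h1 := (Finset.sum_eq_zero_iff_of_nonneg hnn).mp h'' i (Finset.mem_univ i)
  have h2 := (Finset.sum_eq_zero_iff_of_nonneg
    (fun j _ => Complex.normSq_nonneg (M j i))).mp h1 j (Finset.mem_univ j)
  simpa using Complex.normSq_eq_zero.mp h2

section SqrtPort
open scoped MatrixOrder

noncomputable def Matrix.PosSemidef.sqrt {n : ℕ} {A : Matrix (Fin n) (Fin n) ℂ}
    (_ : A.PosSemidef) : Matrix (Fin n) (Fin n) ℂ := CFC.sqrt A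

lemma Matrix.PosSemidef.posSemidef_sqrt {n : ℕ} {A : Matrix (Fin n) (Fin n) ℂ}
    (hA : A.PosSemidef) : hA.sqrt.PosSemidef :=
  Matrix.nonneg_iff_posSemidef.mp (CFC.sqrt_nonneg A)

lemma Matrix.PosSemidef.sqrt_mul_self {n : ℕ} {A : Matrix (Fin n) (Fin n) ℂ}
    (hA : A.PosSemidef) : hA.sqrt * hA.sqrt = A :=
  CFC.sqrt_mul_sqrt_self A (Matrix.nonneg_iff_posSemidef.mpr hA)

end SqrtPort

theorem stmt6 (d : ℕ) (ρ F Pr : Matrix (Fin d) (Fin d) ℂ)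
    (hρ : ρ.PosSemidef) (hTrρ : ρ.trace = 1)
    (hF : F.PosSemidef) (hF1 : (1 - F).PosSemidef)
    (hTr : (ρ * F).trace = 1)
    (hPrH : Pr.IsHermitian) (hPr2 : Pr * Pr = Pr)
    (hrange : LinearMap.range Pr.mulVecLin = LinearMap.range ρ.mulVecLin) :
    (F - Pr).PosSemidef := by
  set G : Matrix (Fin d) (Fin d) ℂ := 1 - F with hG
  have hTrG : (ρ * G).trace = 0 := by
    simp [hG, Matrix.mul_sub, Matrix.trace_sub, hTrρ, hTr]
  have hs := hρ.posSemidef_sqrt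
  have hg := hF1.posSemidef_sqrt
  have hsg : hF1.sqrt * hρ.sqrt = 0 := by
    apply aux_trace_zero
    have key : (hF1.sqrt * hρ.sqrt)ᴴ * (hF1.sqrt * hρ.sqrt)
        = hρ.sqrt * (hF1.sqrt * hF1.sqrt) * hρ.sqrt := by
      rw [Matrix.conjTranspose_mul, hs.1, hg.1]
      noncomm_ring
    rw [key, hF1.sqrt_mul_self, Matrix.trace_mul_cycle, hρ.sqrt_mul_self]
    exact hTrG
  have hGρ : G * ρ = 0 := by
    calc G * ρ = hF1.sqrt * (hF1.sqrt * hρ.sqrt) * hρ.sqrt := by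
          rw [Matrix.mul_assoc, Matrix.mul_assoc, ← Matrix.mul_assoc hF1.sqrt hρ.sqrt,
            Matrix.mul_assoc, hρ.sqrt_mul_self, ← Matrix.mul_assoc, hF1.sqrt_mul_self]
      _ = 0 := by rw [hsg, Matrix.mul_zero, Matrix.zero_mul]
  have hGPr : G * Pr = 0 := by
    have hmv : ∀ v, (G * Pr).mulVec v = 0 := by
      intro v
      have hv : Pr.mulVec v ∈ LinearMap.range ρ.mulVecLin := by
        rw [← hrange]; exact ⟨v, rfl⟩
      obtain ⟨w, hw⟩ := hv
      have h2 : (G * Pr).mulVec v = G.mulVec (ρ.mulVec w) := by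
        rw [← Matrix.mulVec_mulVec]
        simp only [Matrix.mulVecLin_apply] at hw
        rw [hw]
      rw [h2, Matrix.mulVec_mulVec, hGρ, Matrix.zero_mulVec]
    ext i j
    have := congrFun (hmv (Pi.single j 1)) i
    simpa [Matrix.mulVec_single] using this
  have hFPr : F * Pr = Pr := by
    have : (1 - G) * Pr = Pr := by rw [Matrix.sub_mul, hGPr, Matrix.one_mul, sub_zero]
    simpa [hG] using this
  have hPrF : Pr * F = Pr := by
    have := congrArg Matrix.conjTranspose hFPr
    rwa [Matrix.conjTranspose_mul, hPrH.eq, hF.1.eq] at this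
  have hkey : (1 - Pr) * F * (1 - Pr) = F - Pr := by
    rw [Matrix.sub_mul, Matrix.one_mul, hPrF, Matrix.mul_sub, Matrix.mul_one,
      Matrix.sub_mul, hFPr, hPr2]
    abel
  rw [← hkey]
  have hQH : (1 - Pr)ᴴ = 1 - Pr := by
    rw [Matrix.conjTranspose_sub, hPrH.eq, Matrix.conjTranspose_one]
  have := hF.mul_mul_conjTranspose_same (1 - Pr)
  rwa [hQH] at this
end

section
/- Let ψ_1,…,ψ_M be unit vectors in a finite-dimensional Hilbert space whose Gram matrix G (with G_{ij} = ⟨ψ_i, ψ_j⟩) satisfies Σ_{j≠i} |G_{ij}| ≤ 1 for every i. Then there exists an orthonormal family {e_k} of a larger Hilbert space, an isometry embedding the span of the ψ_i into it, such that for each k, ⟨e_k, ψ_i⟩ ≠ 0 for at most two indices i. -/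
open Finset

noncomputable section
namespace Stmt9Aux

local notation "conj'" => starRingEnd ℂ

lemma sqrt_two_mul (r : ℝ) : Real.sqrt (2 * r) = 2 * Real.sqrt (r / 2) := by
  rw [show (2:ℝ) * r = 2^2 * (r/2) by ring, Real.sqrt_mul (by positivity),
    Real.sqrt_sq (by norm_num)]

def alpha (a : ℂ) : ℂ := conj' a / ((Real.sqrt (2 * ‖a‖) : ℝ) : ℂ)
def beta (a : ℂ) : ℂ := ((Real.sqrt (‖a‖ / 2) : ℝ) : ℂ)

lemma mul_self_conj (a : ℂ) : conj' a * a = ((‖a‖^2 : ℝ) : ℂ) := by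
  rw [mul_comm, Complex.mul_conj']
  push_cast
  ring

lemma ratio (a : ℂ) (h : a ≠ 0) :
    ((Real.sqrt (‖a‖/2) : ℝ) : ℂ) / ((Real.sqrt (2 * ‖a‖) : ℝ) : ℂ) = 1/2 := by
  have hn : (0:ℝ) < ‖a‖ := norm_pos_iff.mpr h
  have hb : (0:ℝ) < Real.sqrt (‖a‖/2) := Real.sqrt_pos.mpr (by positivity)
  have hs : ((Real.sqrt (‖a‖/2) : ℝ) : ℂ) ≠ 0 := by exact_mod_cast hb.ne'
  rw [sqrt_two_mul]
  push_cast
  rw [mul_comm, div_mul_eq_div_div, div_self hs]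

lemma conj_alpha_mul_alpha (a : ℂ) : conj' (alpha a) * alpha a = ((‖a‖/2 : ℝ) : ℂ) := by
  by_cases h : a = 0
  · simp [h, alpha]
  have hn : (0:ℝ) < ‖a‖ := norm_pos_iff.mpr h
  have hs : ((Real.sqrt (2 * ‖a‖) : ℝ) : ℂ) ≠ 0 := by
    exact_mod_cast (Real.sqrt_pos.mpr (by positivity : (0:ℝ) < 2 * ‖a‖)).ne'
  rw [alpha, map_div₀, Complex.conj_conj, Complex.conj_ofReal, div_mul_div_comm,
    mul_comm a (conj' a), mul_self_conj a,
    show ((Real.sqrt (2*‖a‖):ℝ):ℂ) * ((Real.sqrt (2*‖a‖):ℝ):ℂ) = ((2*‖a‖ : ℝ):ℂ) by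
      norm_cast; exact Real.mul_self_sqrt (by positivity)]
  rw [div_eq_iff (by exact_mod_cast (by positivity : (2*‖a‖:ℝ) ≠ 0))]
  push_cast
  ring

lemma conj_beta_mul_beta (a : ℂ) : conj' (beta a) * beta a = ((‖a‖/2 : ℝ) : ℂ) := by
  rw [beta, Complex.conj_ofReal]
  norm_cast
  exact Real.mul_self_sqrt (by positivity)

lemma conj_alpha_mul_beta (a : ℂ) : conj' (alpha a) * beta a = a / 2 := by
  by_cases h : a = 0
  · simp [h, alpha, beta]
  rw [alpha, beta, map_div₀, Complex.conj_conj, Complex.conj_ofReal, div_mul_eq_mul_div,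
    mul_comm, ← div_mul_eq_mul_div, ratio a h]
  ring

lemma conj_beta_mul_alpha (a : ℂ) : conj' (beta a) * alpha a = conj' a / 2 := by
  by_cases h : a = 0
  · simp [h, alpha, beta]
  rw [alpha, beta, Complex.conj_ofReal, mul_div_assoc', mul_comm, mul_div_assoc, ratio a h]
  ring


variable {M : ℕ}

def wvec (a : Fin M → Fin M → ℂ) (p q k : Fin M) : ℂ :=
  if p = q then 0 else if k = p then alpha (a p q) else if k = q then beta (a p q) else 0

def uvec (a : Fin M → Fin M → ℂ) (i : Fin M) : (Fin M × Fin M) ⊕ Fin M → ℂ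
  | .inl pq => wvec a pq.1 pq.2 i
  | .inr p => if p = i then
      ((Real.sqrt (1 - ∑ j ∈ univ.erase p, ‖a p j‖) : ℝ) : ℂ) else 0

@[simp] lemma uvec_inl (a : Fin M → Fin M → ℂ) (i : Fin M) (pq : Fin M × Fin M) :
    uvec a i (.inl pq) = wvec a pq.1 pq.2 i := rfl

@[simp] lemma uvec_inr (a : Fin M → Fin M → ℂ) (i p : Fin M) :
    uvec a i (.inr p) = if p = i then
      ((Real.sqrt (1 - ∑ j ∈ univ.erase p, ‖a p j‖) : ℝ) : ℂ) else 0 := rfl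

lemma wvec_ne_zero {a : Fin M → Fin M → ℂ} {p q k : Fin M} (h : wvec a p q k ≠ 0) :
    k = p ∨ k = q := by
  by_contra hc
  push_neg at hc
  simp [wvec, hc.1, hc.2] at h

lemma wvec_left {a : Fin M → Fin M → ℂ} {p q : Fin M} (h : p ≠ q) :
    wvec a p q p = alpha (a p q) := by rw [wvec, if_neg h, if_pos rfl]

lemma wvec_right {a : Fin M → Fin M → ℂ} {p q : Fin M} (h : p ≠ q) :
    wvec a p q q = beta (a p q) := by rw [wvec, if_neg h, if_neg (Ne.symm h), if_pos rfl]

lemma wvec_diag {a : Fin M → Fin M → ℂ} (p k : Fin M) : wvec a p p k = 0 := by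
  rw [wvec, if_pos rfl]

lemma wvec_off {a : Fin M → Fin M → ℂ} {p q k : Fin M} (h1 : k ≠ p) (h2 : k ≠ q) :
    wvec a p q k = 0 := by
  rw [wvec]
  split_ifs <;> first | rfl | exact absurd (by assumption) h1 | exact absurd (by assumption) h2

lemma wterm {a : Fin M → Fin M → ℂ} {i j : Fin M} (hij : i ≠ j) (p q : Fin M) :
    conj' (wvec a p q i) * wvec a p q j =
      if p = i ∧ q = j then a i j / 2 else if p = j ∧ q = i then conj' (a j i) / 2 else 0 := by
  by_cases h1 : p = i ∧ q = j
  · rw [if_pos h1, h1.1, h1.2, wvec_left hij, wvec_right hij, conj_alpha_mul_beta]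
  · rw [if_neg h1]
    by_cases h2 : p = j ∧ q = i
    · rw [if_pos h2, h2.1, h2.2, wvec_right (Ne.symm hij), wvec_left (Ne.symm hij),
        conj_beta_mul_alpha]
    · rw [if_neg h2]
      by_cases hi1 : i = p
      · have hj : wvec a p q j = 0 :=
          wvec_off (fun h => hij (hi1.trans h.symm)) (fun h => h1 ⟨hi1.symm, h.symm⟩)
        rw [hj, mul_zero]
      · by_cases hi2 : i = q
        · have hj : wvec a p q j = 0 :=
            wvec_off (fun h => h2 ⟨h.symm, hi2.symm⟩) (fun h => hij (hi2.trans h.symm))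
          rw [hj, mul_zero]
        · rw [wvec_off hi1 hi2, map_zero, zero_mul]

lemma wterm_diag {a : Fin M → Fin M → ℂ} (i p q : Fin M) :
    conj' (wvec a p q i) * wvec a p q i =
      if p = i ∧ q ≠ i then ((‖a p q‖/2 : ℝ) : ℂ)
      else if q = i ∧ p ≠ i then ((‖a p q‖/2 : ℝ) : ℂ) else 0 := by
  by_cases h1 : p = i ∧ q ≠ i
  · rw [if_pos h1, h1.1, wvec_left (show i ≠ q from fun h => h1.2 h.symm), conj_alpha_mul_alpha]
  · rw [if_neg h1]
    by_cases h2 : q = i ∧ p ≠ i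
    · rw [if_pos h2, h2.1, wvec_right (show p ≠ i from h2.2), conj_beta_mul_beta]
    · rw [if_neg h2]
      by_cases hp : p = i
      · have hq : q = i := by
          by_contra hq
          exact h1 ⟨hp, hq⟩
        rw [hp, hq, wvec_diag, map_zero, zero_mul]
      · by_cases hq : q = i
        · exact absurd ⟨hq, hp⟩ h2
        · rw [wvec_off (show i ≠ p from fun h => hp h.symm) (show i ≠ q from fun h => hq h.symm),
            map_zero, zero_mul]

lemma gram (a : Fin M → Fin M → ℂ) (herm : ∀ i j, a j i = conj' (a i j))
    (diag : ∀ i, a i i = 1) (dom : ∀ i, ∑ j ∈ univ.erase i, ‖a i j‖ ≤ 1) (i j : Fin M) :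
    ∑ k, conj' (uvec a i k) * uvec a j k = a i j := by
  have hnormsymm : ∀ p q, ‖a p q‖ = ‖a q p‖ := by
    intro p q
    rw [herm q p, RCLike.norm_conj]
  have hd : ∀ p, (0:ℝ) ≤ 1 - ∑ j ∈ univ.erase p, ‖a p j‖ := fun p => by linarith [dom p]
  rw [Fintype.sum_sum_type]
  have hsingle : (∑ p : Fin M, conj' (uvec a i (.inr p)) * uvec a j (.inr p))
      = if i = j then ((1 - ∑ j' ∈ univ.erase i, ‖a i j'‖ : ℝ) : ℂ) else 0 := by
    have hpt : ∀ p, conj' (uvec a i (.inr p)) * uvec a j (.inr p)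
        = if p = i ∧ p = j then ((1 - ∑ j' ∈ univ.erase p, ‖a p j'‖ : ℝ) : ℂ) else 0 := by
      intro p
      simp only [uvec_inr]
      by_cases hpi : p = i
      · by_cases hpj : p = j
        · rw [if_pos hpi, if_pos hpj, if_pos ⟨hpi, hpj⟩, Complex.conj_ofReal]
          norm_cast
          exact Real.mul_self_sqrt (hd p)
        · rw [if_neg hpj, mul_zero, if_neg (fun h => hpj h.2)]
      · rw [if_neg hpi, map_zero, zero_mul, if_neg (fun h => hpi h.1)]
    rw [Finset.sum_congr rfl fun p _ => hpt p]
    by_cases hij : i = j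
    · rw [if_pos hij, ← hij]
      simp only [and_self]
      rw [Finset.sum_ite_eq' univ i, if_pos (mem_univ i)]
    · rw [if_neg hij]
      exact Finset.sum_eq_zero fun p _ => if_neg (fun h => hij (h.1.symm.trans h.2))
  have hpair : (∑ pq : Fin M × Fin M, conj' (uvec a i (.inl pq)) * uvec a j (.inl pq))
      = if i = j then ((∑ j' ∈ univ.erase i, ‖a i j'‖ : ℝ) : ℂ) else a i j := by
    simp only [uvec_inl]
    rw [Fintype.sum_prod_type]
    by_cases hij : i = j
    · rw [if_pos hij, ← hij]
      rw [Finset.sum_congr rfl fun p _ => Finset.sum_congr rfl fun q _ => wterm_diag i p q]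
      have split : ∀ p q : Fin M,
          (if p = i ∧ q ≠ i then ((‖a p q‖/2 : ℝ) : ℂ)
            else if q = i ∧ p ≠ i then ((‖a p q‖/2 : ℝ) : ℂ) else 0)
          = (if p = i ∧ q ≠ i then ((‖a p q‖/2 : ℝ) : ℂ) else 0)
            + (if q = i ∧ p ≠ i then ((‖a p q‖/2 : ℝ) : ℂ) else 0) := by
        intro p q
        by_cases h1 : p = i ∧ q ≠ i
        · rw [if_pos h1, if_pos h1, if_neg (fun h => h.2 h1.1), add_zero]
        · rw [if_neg h1, if_neg h1, zero_add]
      rw [Finset.sum_congr rfl fun p _ => Finset.sum_congr rfl fun q _ => split p q]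
      rw [Finset.sum_congr rfl fun (p : Fin M) _ => Finset.sum_add_distrib,
        Finset.sum_add_distrib]
      have e1 : ∀ p : Fin M, (∑ q : Fin M, if p = i ∧ q ≠ i then ((‖a p q‖/2 : ℝ) : ℂ) else 0)
          = if p = i then ∑ q ∈ univ.erase i, ((‖a p q‖/2 : ℝ) : ℂ) else 0 := by
        intro p
        by_cases hp : p = i
        · rw [if_pos hp,
            ← Finset.sum_erase (a := i) univ (by simp :
              (if p = i ∧ (i : Fin M) ≠ i then ((‖a p i‖/2 : ℝ) : ℂ) else 0) = 0)]
          exact Finset.sum_congr rfl fun q hq => if_pos ⟨hp, Finset.ne_of_mem_erase hq⟩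
        · rw [if_neg hp]
          exact Finset.sum_eq_zero fun q _ => if_neg (fun h => hp h.1)
      have e2 : ∀ p : Fin M, (∑ q : Fin M, if q = i ∧ p ≠ i then ((‖a p q‖/2 : ℝ) : ℂ) else 0)
          = if p = i then 0 else ((‖a p i‖/2 : ℝ) : ℂ) := by
        intro p
        by_cases hp : p = i
        · rw [if_pos hp]
          exact Finset.sum_eq_zero fun q _ => if_neg (fun h => h.2 hp)
        · rw [if_neg hp]
          have : ∀ q : Fin M, (if q = i ∧ p ≠ i then ((‖a p q‖/2 : ℝ) : ℂ) else 0)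
              = if q = i then ((‖a p q‖/2 : ℝ) : ℂ) else 0 := by
            intro q
            by_cases hq : q = i
            · rw [if_pos ⟨hq, hp⟩, if_pos hq]
            · rw [if_neg (fun h => hq h.1), if_neg hq]
          rw [Finset.sum_congr rfl fun q _ => this q, Finset.sum_ite_eq' univ i,
            if_pos (mem_univ i)]
      rw [Finset.sum_congr rfl fun p _ => e1 p, Finset.sum_ite_eq' univ i,
        if_pos (mem_univ i), Finset.sum_congr rfl fun p _ => e2 p,
        ← Finset.sum_erase (a := i) univ (by simp : (if (i : Fin M) = i then (0:ℂ)
          else ((‖a i i‖/2 : ℝ) : ℂ)) = 0)]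
      rw [Finset.sum_congr rfl fun p hp => if_neg (Finset.ne_of_mem_erase hp)]
      rw [Complex.ofReal_sum, ← Finset.sum_add_distrib]
      refine Finset.sum_congr rfl fun q hq => ?_
      rw [hnormsymm q i]
      push_cast
      ring
    · rw [if_neg hij]
      rw [Finset.sum_congr rfl fun p _ => Finset.sum_congr rfl fun q _ => wterm hij p q]
      have hdisj : ∀ p q : Fin M, (p = i ∧ q = j) → ¬(p = j ∧ q = i) := by
        intro p q h1 h2
        exact hij (h1.1.symm.trans h2.1)
      have split : ∀ p q : Fin M,
          (if p = i ∧ q = j then a i j / 2 else if p = j ∧ q = i then conj' (a j i) / 2 else 0)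
          = (if p = i ∧ q = j then a i j / 2 else 0)
            + (if p = j ∧ q = i then conj' (a j i) / 2 else 0) := by
        intro p q
        by_cases h1 : p = i ∧ q = j
        · rw [if_pos h1, if_pos h1, if_neg (hdisj p q h1), add_zero]
        · rw [if_neg h1, if_neg h1, zero_add]
      rw [Finset.sum_congr rfl fun p _ => Finset.sum_congr rfl fun q _ => split p q]
      rw [Finset.sum_congr rfl fun (p : Fin M) _ => Finset.sum_add_distrib,
        Finset.sum_add_distrib]
      have c1 : ∀ (u v : Fin M) (c : ℂ),
          (∑ p : Fin M, ∑ q : Fin M, if p = u ∧ q = v then c else 0) = c := by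
        intro u v c
        have inner : ∀ p : Fin M, (∑ q : Fin M, if p = u ∧ q = v then c else 0)
            = if p = u then c else 0 := by
          intro p
          by_cases hp : p = u
          · rw [if_pos hp]
            have : ∀ q : Fin M, (if p = u ∧ q = v then c else 0) = if q = v then c else 0 := by
              intro q
              by_cases hq : q = v
              · rw [if_pos ⟨hp, hq⟩, if_pos hq]
              · rw [if_neg (fun h => hq h.2), if_neg hq]
            rw [Finset.sum_congr rfl fun q _ => this q, Finset.sum_ite_eq' univ v,
              if_pos (mem_univ v)]
          · rw [if_neg hp]
            exact Finset.sum_eq_zero fun q _ => if_neg (fun h => hp h.1)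
        rw [Finset.sum_congr rfl fun p _ => inner p, Finset.sum_ite_eq' univ u,
          if_pos (mem_univ u)]
      rw [c1 i j (a i j / 2), c1 j i (conj' (a j i) / 2), herm i j, Complex.conj_conj]
      ring
  rw [hpair, hsingle]
  by_cases hij : i = j
  · rw [if_pos hij, if_pos hij, ← hij, diag i]
    push_cast
    ring
  · rw [if_neg hij, if_neg hij, add_zero]

lemma bilin_exchange {ι κ : Type*} [Fintype ι] [Fintype κ] (u : ι → κ → ℂ) (G : ι → ι → ℂ)
    (hg : ∀ i j, ∑ k, conj' (u i k) * u j k = G i j) (c d : ι → ℂ) :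
    ∑ k, conj' (∑ i, c i * u i k) * (∑ j, d j * u j k)
      = ∑ i, ∑ j, conj' (c i) * d j * G i j := by
  have expand : ∀ k, conj' (∑ i, c i * u i k) * (∑ j, d j * u j k)
      = ∑ i, ∑ j, conj' (c i) * d j * (conj' (u i k) * u j k) := by
    intro k
    rw [map_sum, Finset.sum_mul_sum]
    refine Finset.sum_congr rfl fun i _ => Finset.sum_congr rfl fun j _ => ?_
    rw [map_mul]
    ring
  rw [Finset.sum_congr rfl fun k _ => expand k, Finset.sum_comm]
  refine Finset.sum_congr rfl fun i _ => ?_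
  rw [Finset.sum_comm]
  refine Finset.sum_congr rfl fun j _ => ?_
  rw [← Finset.mul_sum, hg i j]

lemma parseval {ι : Type*} [Fintype ι] {E : Type*} [NormedAddCommGroup E]
    [InnerProductSpace ℂ E] (b : OrthonormalBasis ι ℂ E) (y : E) :
    ∑ i, ‖(inner ℂ (b i) y : ℂ)‖^2 = ‖y‖^2 := by
  calc ∑ i, ‖(inner ℂ (b i) y : ℂ)‖^2 = ∑ i, ‖b.repr y i‖^2 := by
        refine Finset.sum_congr rfl fun i _ => ?_
        rw [b.repr_apply_apply]
    _ = ‖b.repr y‖^2 := by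
        rw [EuclideanSpace.norm_eq, Real.sq_sqrt (by positivity)]
    _ = ‖y‖^2 := by rw [b.repr.norm_map y]

lemma exists_isometry {H : Type*} [NormedAddCommGroup H] [InnerProductSpace ℂ H]
    {ι : Type*} [Fintype ι] (coord : ι → H → ℂ)
    (coord_add : ∀ k x y, coord k (x + y) = coord k x + coord k y)
    (coord_smul : ∀ k (r : ℂ) x, coord k (r • x) = r * coord k x)
    (coordsum : ∀ x, ∑ k, ‖coord k x‖^2 = ‖x‖^2) :
    ∃ J : H →ₗᵢ[ℂ] EuclideanSpace ℂ (Fin (Fintype.card ι)),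
      ∀ x k, J x k = coord ((Fintype.equivFin ι).symm k) x := by
  let Jlin : H →ₗ[ℂ] EuclideanSpace ℂ (Fin (Fintype.card ι)) :=
    { toFun := fun x => WithLp.toLp 2 (fun n => coord ((Fintype.equivFin ι).symm n) x)
      map_add' := fun x y => by
        rw [← WithLp.toLp_add]; exact congrArg _ (funext fun n => coord_add _ x y)
      map_smul' := fun r x => by
        rw [← WithLp.toLp_smul]; exact congrArg _ (funext fun n => coord_smul _ r x) }
  refine ⟨⟨Jlin, fun x => ?_⟩, fun x k => rfl⟩
  rw [EuclideanSpace.norm_eq]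
  have hs : ∑ n, ‖Jlin x n‖^2 = ∑ k', ‖coord k' x‖^2 :=
    Fintype.sum_equiv (Fintype.equivFin ι).symm _ _ (fun n => rfl)
  rw [hs, coordsum x, Real.sqrt_sq (norm_nonneg x)]

end Stmt9Aux

open Stmt9Aux Finset in
theorem stmt9 {H : Type*} [NormedAddCommGroup H] [InnerProductSpace ℂ H]
    [FiniteDimensional ℂ H]
    (M : ℕ) (ψ : Fin M → H) (hunit : ∀ i, ‖ψ i‖ = 1)
    (hdom : ∀ i, ∑ j ∈ Finset.univ.erase i, ‖(inner ℂ (ψ i) (ψ j) : ℂ)‖ ≤ 1) :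
    ∃ (N : ℕ) (J : H →ₗᵢ[ℂ] EuclideanSpace ℂ (Fin N)),
      ∀ k : Fin N, {i | J (ψ i) k ≠ 0}.ncard ≤ 2 := by
  classical
  set a : Fin M → Fin M → ℂ := fun i j => inner ℂ (ψ i) (ψ j) with ha
  have herm : ∀ i j, a j i = (starRingEnd ℂ) (a i j) := fun i j =>
    (inner_conj_symm (ψ j) (ψ i)).symm
  have diag : ∀ i, a i i = 1 := by
    intro i
    have : (inner ℂ (ψ i) (ψ i) : ℂ) = (‖ψ i‖ : ℂ)^2 := inner_self_eq_norm_sq_to_K (ψ i)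
    rw [ha]
    simp only [this, hunit i, Complex.ofReal_one, one_pow]
  have hg : ∀ i j, ∑ k, (starRingEnd ℂ) (uvec a i k) * uvec a j k = a i j :=
    gram a herm diag hdom
  have inner_expand : ∀ (c d : Fin M → ℂ),
      (inner ℂ (∑ i, c i • ψ i) (∑ j, d j • ψ j) : ℂ)
        = ∑ i, ∑ j, (starRingEnd ℂ) (c i) * d j * a i j := by
    intro c d
    rw [sum_inner]
    refine Finset.sum_congr rfl fun i _ => ?_
    rw [inner_smul_left, inner_sum, Finset.mul_sum]
    refine Finset.sum_congr rfl fun j _ => ?_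
    rw [inner_smul_right]
    ring
  have key : ∀ (c d : Fin M → ℂ),
      ∑ k, (starRingEnd ℂ) (∑ i, c i * uvec a i k) * (∑ j, d j * uvec a j k)
        = (inner ℂ (∑ i, c i • ψ i) (∑ j, d j • ψ j) : ℂ) := by
    intro c d
    rw [bilin_exchange (uvec a) a hg c d, inner_expand]
  -- subspaces and bases
  set S : Submodule ℂ H := Submodule.span ℂ (Set.range ψ) with hS
  have hψS : ∀ i, ψ i ∈ S := fun i => Submodule.subset_span (Set.mem_range_self i)
  set n1 := Module.finrank ℂ S with hn1
  set n2 := Module.finrank ℂ Sᗮ with hn2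
  set f : OrthonormalBasis (Fin n1) ℂ S := stdOrthonormalBasis ℂ S with hf
  set fh : OrthonormalBasis (Fin n2) ℂ Sᗮ := stdOrthonormalBasis ℂ Sᗮ with hfh
  -- coefficients for basis vectors
  have hrep : ∀ m : Fin n1, ∃ c : Fin M → ℂ, ∑ i, c i • ψ i = ((f m : H)) := by
    intro m
    exact (Submodule.mem_span_range_iff_exists_fun ℂ).mp ((f m).2)
  choose c hc using hrep
  set g : Fin n1 → ((Fin M × Fin M) ⊕ Fin M) → ℂ :=
    fun m k => ∑ i, c m i * uvec a i k with hgdef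
  have gorth : ∀ m m', ∑ k, (starRingEnd ℂ) (g m k) * g m' k
      = if m = m' then 1 else 0 := by
    intro m m'
    rw [hgdef]
    rw [key (c m) (c m'), hc m, hc m', ← Submodule.coe_inner]
    exact orthonormal_iff_ite.mp f.orthonormal m m'
  -- the coordinate functions
  set e : (((Fin M × Fin M) ⊕ Fin M) ⊕ Fin n2) ≃
      Fin (Fintype.card (((Fin M × Fin M) ⊕ Fin M) ⊕ Fin n2)) :=
    Fintype.equivFin _ with he
  set coord : (((Fin M × Fin M) ⊕ Fin M) ⊕ Fin n2) → H → ℂ := fun k' x =>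
    Sum.elim (fun k => ∑ m, (inner ℂ ((f m : H)) x : ℂ) * g m k)
      (fun l => (inner ℂ ((fh l : H)) x : ℂ)) k' with hcoord
  have coord_add : ∀ (k' : ((Fin M × Fin M) ⊕ Fin M) ⊕ Fin n2) x y, coord k' (x + y) = coord k' x + coord k' y := by
    intro k' x y
    rcases k' with k | l
    · simp only [hcoord, Sum.elim_inl, inner_add_right, add_mul, Finset.sum_add_distrib]
    · simp only [hcoord, Sum.elim_inr, inner_add_right]
  have coord_smul : ∀ (k' : ((Fin M × Fin M) ⊕ Fin M) ⊕ Fin n2) (r : ℂ) x, coord k' (r • x) = r * coord k' x := by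
    intro k' r x
    rcases k' with k | l
    · simp only [hcoord, Sum.elim_inl, inner_smul_right, Finset.mul_sum, mul_assoc]
    · simp only [hcoord, Sum.elim_inr, inner_smul_right]
  -- Parseval property
  have coordsum : ∀ x : H, ∑ k' : ((Fin M × Fin M) ⊕ Fin M) ⊕ Fin n2, ‖coord k' x‖^2 = ‖x‖^2 := by
    intro x
    rw [Fintype.sum_sum_type]
    have block1 : ∑ k : (Fin M × Fin M) ⊕ Fin M, ‖coord (Sum.inl k) x‖^2
        = ∑ m, ‖(inner ℂ ((f m : H)) x : ℂ)‖^2 := by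
      have cx : ∑ k : (Fin M × Fin M) ⊕ Fin M, ((‖coord (Sum.inl k) x‖^2 : ℝ) : ℂ)
          = ∑ m, ((‖(inner ℂ ((f m : H)) x : ℂ)‖^2 : ℝ) : ℂ) := by
        have lhs : ∀ k : (Fin M × Fin M) ⊕ Fin M, ((‖coord (Sum.inl k) x‖^2 : ℝ) : ℂ)
            = (starRingEnd ℂ) (coord (Sum.inl k) x) * coord (Sum.inl k) x :=
          fun k => (mul_self_conj _).symm
        rw [Finset.sum_congr rfl fun k _ => lhs k]
        have : ∀ k : (Fin M × Fin M) ⊕ Fin M, coord (Sum.inl k) x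
            = ∑ m, (inner ℂ ((f m : H)) x : ℂ) * g m k := fun k => rfl
        rw [Finset.sum_congr rfl fun k _ => by rw [this k]]
        rw [bilin_exchange g (fun m m' => if m = m' then 1 else 0) gorth _ _]
        have collapse : ∀ m : Fin n1,
            ∑ m', (starRingEnd ℂ) ((inner ℂ ((f m : H)) x : ℂ))
                * (inner ℂ ((f m' : H)) x : ℂ) * (if m = m' then 1 else 0)
            = (starRingEnd ℂ) ((inner ℂ ((f m : H)) x : ℂ)) * (inner ℂ ((f m : H)) x : ℂ) := by
          intro m
          have : ∀ m' : Fin n1, (starRingEnd ℂ) ((inner ℂ ((f m : H)) x : ℂ))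
              * (inner ℂ ((f m' : H)) x : ℂ) * (if m = m' then 1 else 0)
              = if m' = m then (starRingEnd ℂ) ((inner ℂ ((f m : H)) x : ℂ))
                  * (inner ℂ ((f m' : H)) x : ℂ) else 0 := by
            intro m'
            by_cases hm : m' = m
            · rw [if_pos hm, if_pos hm.symm, mul_one]
            · rw [if_neg (fun hh => hm hh.symm), if_neg hm, mul_zero]
          rw [Finset.sum_congr rfl fun m' _ => this m', Finset.sum_ite_eq' univ m,
            if_pos (mem_univ m)]
        rw [Finset.sum_congr rfl fun m _ => collapse m]
        exact Finset.sum_congr rfl fun m _ => (mul_self_conj _)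
      exact_mod_cast cx
    have block2 : ∑ l : Fin n2, ‖coord (Sum.inr l) x‖^2
        = ∑ l, ‖(inner ℂ ((fh l : H)) x : ℂ)‖^2 := rfl
    rw [block1, block2]
    have proj1 : ∀ m, (inner ℂ ((f m : H)) x : ℂ) = inner ℂ (f m) (S.orthogonalProjectionOnto x) :=
      fun m => (Submodule.inner_orthogonalProjectionOnto_eq_of_mem_left (f m) x).symm
    have proj2 : ∀ l, (inner ℂ ((fh l : H)) x : ℂ) = inner ℂ (fh l) (Sᗮ.orthogonalProjectionOnto x) :=
      fun l => (Submodule.inner_orthogonalProjectionOnto_eq_of_mem_left (fh l) x).symm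
    have e1 : ∑ m : Fin n1, ‖(inner ℂ ((f m : H)) x : ℂ)‖^2
        = ‖S.orthogonalProjectionOnto x‖^2 := by
      rw [Finset.sum_congr rfl fun (m : Fin n1) _ => by rw [proj1 m]]
      exact parseval f _
    have e2 : ∑ l : Fin n2, ‖(inner ℂ ((fh l : H)) x : ℂ)‖^2
        = ‖Sᗮ.orthogonalProjectionOnto x‖^2 := by
      rw [Finset.sum_congr rfl fun (l : Fin n2) _ => by rw [proj2 l]]
      exact parseval fh _
    rw [e1, e2]
    exact (Submodule.norm_sq_eq_add_norm_sq_projection x S).symm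
  obtain ⟨J, hJapp⟩ := exists_isometry coord coord_add coord_smul coordsum
  refine ⟨_, J, ?_⟩
  -- evaluate J on the ψ i
  have hcoord_psi : ∀ (i : Fin M) (k : (Fin M × Fin M) ⊕ Fin M), coord (Sum.inl k) (ψ i) = uvec a i k := by
    intro i
    set E : Fin M → ℂ := fun j => (if j = i then 1 else 0)
      - ∑ m, (inner ℂ ((f m : H)) (ψ i) : ℂ) * c m j with hE
    have hEj : ∀ j, E j = (if j = i then 1 else 0)
        - ∑ m, (inner ℂ ((f m : H)) (ψ i) : ℂ) * c m j := fun j => by rw [hE]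
    have hz : ∀ k : (Fin M × Fin M) ⊕ Fin M, uvec a i k - coord (Sum.inl k) (ψ i) = ∑ j, E j * uvec a j k := by
      intro k
      have e1 : uvec a i k = ∑ j, (if j = i then 1 else 0) * uvec a j k := by
        rw [Finset.sum_congr rfl fun j _ => (ite_mul _ _ _ _ : (if j = i then (1:ℂ) else 0)
          * uvec a j k = if j = i then 1 * uvec a j k else 0 * uvec a j k)]
        simp only [one_mul, zero_mul]
        rw [Finset.sum_ite_eq' univ i, if_pos (mem_univ i)]
      have e2 : coord (Sum.inl k) (ψ i)
          = ∑ j, (∑ m, (inner ℂ ((f m : H)) (ψ i) : ℂ) * c m j) * uvec a j k := by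
        have : coord (Sum.inl k) (ψ i) = ∑ m, (inner ℂ ((f m : H)) (ψ i) : ℂ) * g m k := rfl
        rw [this, hgdef]
        simp only [Finset.mul_sum, Finset.sum_mul]
        rw [Finset.sum_comm]
        exact Finset.sum_congr rfl fun j _ => Finset.sum_congr rfl fun m _ => by ring
      rw [e1, e2, ← Finset.sum_sub_distrib]
      exact Finset.sum_congr rfl fun j _ => by rw [hEj j]; ring
    have hv : ∑ j, E j • ψ j = 0 := by
      have expand : ∑ j, E j • ψ j
          = ψ i - ∑ m, (inner ℂ ((f m : H)) (ψ i) : ℂ) • ((f m : H)) := by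
        have step : ∀ j, E j • ψ j = (if j = i then (1:ℂ) else 0) • ψ j
            - (∑ m, (inner ℂ ((f m : H)) (ψ i) : ℂ) * c m j) • ψ j := by
          intro j
          rw [hEj j, sub_smul]
        rw [Finset.sum_congr rfl fun j _ => step j]
        rw [Finset.sum_sub_distrib]
        congr 1
        · have step2 : ∀ j : Fin M, ((if j = i then (1:ℂ) else 0) • ψ j)
              = if j = i then ψ j else 0 := by
            intro j
            by_cases hj : j = i
            · rw [if_pos hj, if_pos hj, one_smul]
            · rw [if_neg hj, if_neg hj, zero_smul]
          rw [Finset.sum_congr rfl fun j _ => step2 j, Finset.sum_ite_eq' univ i,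
            if_pos (mem_univ i)]
        · rw [Finset.sum_congr rfl fun j _ => Finset.sum_smul, Finset.sum_comm]
          refine Finset.sum_congr rfl fun m _ => ?_
          rw [← hc m, Finset.smul_sum]
          refine Finset.sum_congr rfl fun j _ => ?_
          rw [smul_smul]
      rw [expand, sub_eq_zero]
      set ψ' : S := (⟨ψ i, hψS i⟩ : S) with hψ'
      calc ψ i = ((ψ' : H)) := rfl
        _ = ((∑ m, (inner ℂ (f m) ψ' : ℂ) • f m : S) : H) := by rw [f.sum_repr' ψ']
        _ = ∑ m, (inner ℂ ((f m : H)) (ψ i) : ℂ) • ((f m : H)) := by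
            rw [Submodule.coe_sum]
            refine Finset.sum_congr rfl fun m _ => ?_
            rw [SetLike.val_smul, Submodule.coe_inner]
    have hzero : ∑ k : (Fin M × Fin M) ⊕ Fin M, ((‖∑ j, E j * uvec a j k‖^2 : ℝ) : ℂ) = 0 := by
      rw [Finset.sum_congr rfl fun k _ => (mul_self_conj (∑ j, E j * uvec a j k)).symm]
      rw [key E E, hv, inner_zero_right]
    have hreal : ∑ k : (Fin M × Fin M) ⊕ Fin M, ‖∑ j, E j * uvec a j k‖^2 = 0 := by exact_mod_cast hzero
    intro k
    have hk : ‖∑ j, E j * uvec a j k‖^2 = 0 :=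
      (Finset.sum_eq_zero_iff_of_nonneg (fun k _ => by positivity)).mp hreal k (mem_univ k)
    have hzk : ∑ j, E j * uvec a j k = 0 :=
      norm_eq_zero.mp (pow_eq_zero_iff two_ne_zero |>.mp hk)
    have := hz k
    rw [hzk] at this
    exact (sub_eq_zero.mp this).symm
  have hcoord_psi_inr : ∀ (i : Fin M) (l : Fin n2), coord (Sum.inr l) (ψ i) = 0 := by
    intro i l
    have h0 : (inner ℂ (ψ i) ((fh l : H)) : ℂ) = 0 :=
      (Submodule.mem_orthogonal S ((fh l : H))).mp (fh l).2 (ψ i) (hψS i)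
    have : coord (Sum.inr l) (ψ i) = (inner ℂ ((fh l : H)) (ψ i) : ℂ) := rfl
    rw [this, ← inner_conj_symm, h0, map_zero]
  intro n
  have happ : ∀ x, J x n = coord (e.symm n) x := fun x => hJapp x n
  rcases hsplit : e.symm n with k | l
  · rcases k with pq | p
    · have hsub : {i | J (ψ i) n ≠ 0} ⊆ {pq.1, pq.2} := by
        intro i hi
        have hval : J (ψ i) n = wvec a pq.1 pq.2 i := by
          rw [happ (ψ i), hsplit, hcoord_psi i (Sum.inl pq)]
          rfl
        rw [Set.mem_setOf_eq, hval] at hi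
        rcases wvec_ne_zero hi with hh | hh
        · exact Or.inl hh
        · exact Or.inr hh
      refine le_trans (Set.ncard_le_ncard hsub (Set.toFinite _)) ?_
      refine le_trans (Set.ncard_insert_le pq.1 {pq.2}) ?_
      rw [Set.ncard_singleton]
    · have hsub : {i | J (ψ i) n ≠ 0} ⊆ {p} := by
        intro i hi
        have hval : J (ψ i) n = uvec a i (Sum.inr p) := by
          rw [happ (ψ i), hsplit, hcoord_psi i (Sum.inr p)]
        rw [Set.mem_setOf_eq, hval] at hi
        by_contra hip
        have : ¬ p = i := fun hh => hip (hh.symm ▸ rfl)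
        rw [uvec_inr, if_neg this] at hi
        exact hi rfl
      refine le_trans (Set.ncard_le_ncard hsub (Set.toFinite _)) ?_
      rw [Set.ncard_singleton]
      norm_num
  · have hempty : {i | J (ψ i) n ≠ 0} = ∅ := by
      refine Set.eq_empty_iff_forall_notMem.mpr fun i hi => ?_
      rw [Set.mem_setOf_eq, happ (ψ i), hsplit, hcoord_psi_inr i l] at hi
      exact hi rfl
    rw [hempty, Set.ncard_empty]
    norm_num
end
end

section
/- Let A be a real symmetric positive semi-definite matrix indexed by a finite set X with entries in [0,1] and diagonal entries equal to 1, and let q = min over probability distributions P on X of Σ_{x,x'} P(x)P(x') A_{x,x'}. Suppose ψ_1,…,ψ_M are unit vectors of the form ψ_i = ⊗_{ℓ=1}^n φ_{x_{iℓ}} where x_i ∈ X^n and the unit vectors φ_x satisfy |⟨φ_x, φ_{x'}⟩| ≥ A_{x,x'}, and suppose there is an orthonormal basis in which each coordinate is non-zero for at most L of the ψ_i. Then M ≤ L · q^{-n}. -/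
lemma tensor_psd_s11 {X : Type} [Fintype X] {A : Matrix X X ℝ} (hA : A.PosSemidef)
    {n : ℕ} (w : (Fin n → X) → ℝ) :
    0 ≤ ∑ y : Fin n → X, ∑ y' : Fin n → X, w y * w y' * ∏ ℓ, A (y ℓ) (y' ℓ) := by
  classical
  open scoped MatrixOrder in
  obtain ⟨C, hC⟩ : ∃ C : Matrix X X ℝ, A = C.conjTranspose * C :=
    ⟨CFC.sqrt A, by rw [← Matrix.star_eq_conjTranspose, (CFC.sqrt_nonneg A).isSelfAdjoint,
      CFC.sqrt_mul_sqrt_self A hA.nonneg]⟩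
  have hAe : ∀ a a', A a a' = ∑ k, C k a * C k a' := fun a a' => by
    rw [hC]; simp [Matrix.mul_apply, Matrix.conjTranspose_apply]
  have key : ∀ y y' : Fin n → X, w y * w y' * ∏ ℓ, A (y ℓ) (y' ℓ)
      = ∑ κ : Fin n → X, (w y * ∏ ℓ, C (κ ℓ) (y ℓ)) * (w y' * ∏ ℓ, C (κ ℓ) (y' ℓ)) := by
    intro y y'
    have h1 : (∏ ℓ, A (y ℓ) (y' ℓ)) = ∑ κ : Fin n → X, ∏ ℓ, C (κ ℓ) (y ℓ) * C (κ ℓ) (y' ℓ) := by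
      simp_rw [hAe]; exact Fintype.prod_sum fun ℓ k => C k (y ℓ) * C k (y' ℓ)
    rw [h1, Finset.mul_sum]
    exact Finset.sum_congr rfl fun κ _ => by rw [Finset.prod_mul_distrib]; ring
  calc (0:ℝ) ≤ ∑ κ : Fin n → X, (∑ y, w y * ∏ ℓ, C (κ ℓ) (y ℓ))^2 :=
        Finset.sum_nonneg fun κ _ => sq_nonneg _
    _ = ∑ y : Fin n → X, ∑ y' : Fin n → X, w y * w y' * ∏ ℓ, A (y ℓ) (y' ℓ) := by
        simp_rw [key]
        rw [show (∑ y : Fin n → X, ∑ y' : Fin n → X, ∑ κ : Fin n → X,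
            (w y * ∏ ℓ, C (κ ℓ) (y ℓ)) * (w y' * ∏ ℓ, C (κ ℓ) (y' ℓ)))
          = ∑ y : Fin n → X, ∑ κ : Fin n → X, ∑ y' : Fin n → X,
            (w y * ∏ ℓ, C (κ ℓ) (y ℓ)) * (w y' * ∏ ℓ, C (κ ℓ) (y' ℓ)) from
          Finset.sum_congr rfl fun _ _ => Finset.sum_comm, Finset.sum_comm]
        exact Finset.sum_congr rfl fun κ _ => by rw [sq, Finset.sum_mul_sum]


lemma exists_minimizer {X : Type} [Fintype X] [Nonempty X] (A : Matrix X X ℝ) (hA : A.PosSemidef) :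
    ∃ P : X → ℝ, (∀ a, 0 ≤ P a) ∧ ∑ a, P a = 1 ∧
      (∀ Q : X → ℝ, (∀ a, 0 ≤ Q a) → ∑ a, Q a = 1 →
        ∑ a, ∑ a', P a * P a' * A a a' ≤ ∑ a, ∑ a', Q a * Q a' * A a a') ∧
      (∀ x0 : X, ∑ a, ∑ a', P a * P a' * A a a' ≤ ∑ a', A x0 a' * P a') := by
  classical
  set f : (X → ℝ) → ℝ := fun P => ∑ a, ∑ a', P a * P a' * A a a' with hf_def
  have hf : Continuous f := by
    apply continuous_finset_sum; intro a _
    apply continuous_finset_sum; intro a' _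
    exact ((continuous_apply a).mul (continuous_apply a')).mul continuous_const
  have hsym : ∀ a b : X, A a b = A b a := fun a b => ((hA.1.apply a b).symm).trans (star_trivial _)
  obtain ⟨z⟩ := ‹Nonempty X›
  have helmem : (fun a => if a = z then (1:ℝ) else 0) ∈ stdSimplex ℝ X := by
    constructor
    · intro a; by_cases h : a = z <;> simp [h]
    · simp [Finset.sum_ite_eq']
  obtain ⟨P, hPmem, hPmin⟩ :=
    (isCompact_stdSimplex ℝ X).exists_isMinOn ⟨_, helmem⟩ hf.continuousOn
  obtain ⟨hP0, hP1⟩ := hPmem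
  refine ⟨P, hP0, hP1, fun Q hQ0 hQ1 => hPmin ⟨hQ0, hQ1⟩, ?_⟩
  intro x0
  set q : ℝ := f P with hq_def
  set c : ℝ := ∑ a', A x0 a' * P a' with hc_def
  set D : ℝ := A x0 x0 with hD_def
  have key : ∀ t : ℝ, 0 ≤ t → t ≤ 1 → q ≤ (1-t)^2*q + 2*(t*(1-t))*c + t^2*D := by
    intro t ht0 ht1
    set Qt : X → ℝ := fun a => (1-t)*P a + t*(if a = x0 then 1 else 0) with hQt_def
    have hmem : Qt ∈ stdSimplex ℝ X := by
      constructor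
      · intro a
        by_cases h : a = x0 <;> simp [hQt_def, h] <;> nlinarith [hP0 a, hP0 x0]
      · simp only [hQt_def, Finset.sum_add_distrib, ← Finset.mul_sum, hP1,
          Finset.sum_ite_eq', Finset.mem_univ, if_true]
        ring
    have hle : q ≤ f Qt := hPmin hmem
    have pointwise : ∀ a a', Qt a * Qt a' * A a a' =
        (1-t)^2 * (P a * P a' * A a a') + ((1-t)*t) * (if a' = x0 then P a * A a a' else 0)
        + (t*(1-t)) * (if a = x0 then P a' * A a a' else 0)
        + t^2 * (if a = x0 then (if a' = x0 then A a a' else 0) else 0) := by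
      intro a a'
      by_cases h1 : a = x0 <;> by_cases h2 : a' = x0 <;> simp [hQt_def, h1, h2] <;> ring
    have hc2 : ∑ a, P a * A a x0 = c := by
      rw [hc_def]; exact Finset.sum_congr rfl fun a _ => by rw [hsym a x0]; ring
    have expand : f Qt = (1-t)^2*q + 2*(t*(1-t))*c + t^2*D := by
      simp only [hf_def]
      simp only [pointwise, Finset.sum_add_distrib, ← Finset.mul_sum,
        Finset.sum_ite_eq', Finset.mem_univ, if_true, Finset.sum_ite_irrel,
        Finset.sum_const_zero]
      have hc3 : ∑ a : X, P a * A x0 a = ∑ a' : X, A x0 a' * P a' :=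
        Finset.sum_congr rfl fun a _ => mul_comm _ _
      rw [hc2, hc3]
      simp only [hq_def, hf_def, hc_def, hD_def]
      ring
    rw [expand] at hle; exact hle
  have key2 : ∀ t : ℝ, 0 < t → t ≤ 1 → 0 ≤ 2*(c-q) + t*(q-2*c+D) := by
    intro t ht0 ht1
    have h := key t ht0.le ht1
    have hprod : 0 ≤ t * (2*(c-q) + t*(q-2*c+D)) := by nlinarith
    exact (mul_nonneg_iff_of_pos_left ht0).mp hprod
  by_contra hcon
  push_neg at hcon
  have hqc : c < q := by
    simp only [hq_def, hc_def] at hcon ⊢; linarith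
  set s : ℝ := q - 2*c + D with hs_def
  have hs1 : 0 ≤ 2*(c-q) + s := by simpa using key2 1 one_pos le_rfl
  have hs_pos : 0 < s := by linarith
  have ht0 := key2 ((q-c)/s) (div_pos (by linarith) hs_pos) (by rw [div_le_one hs_pos]; linarith)
  rw [div_mul_cancel₀ _ (ne_of_gt hs_pos)] at ht0
  linarith

lemma qn_le_form {X : Type} [Fintype X] {A : Matrix X X ℝ} (hA : A.PosSemidef)
    {n : ℕ} {q : ℝ} (hq0 : 0 ≤ q) (P : X → ℝ) (hP0 : ∀ a, 0 ≤ P a) (hP1 : ∑ a, P a = 1)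
    (hqP : ∑ a, ∑ a', P a * P a' * A a a' = q)
    (hmin : ∀ x0 : X, q ≤ ∑ a', A x0 a' * P a')
    (R : (Fin n → X) → ℝ) (hR0 : ∀ y, 0 ≤ R y) (hR1 : ∑ y, R y = 1) :
    q ^ n ≤ ∑ y : Fin n → X, ∑ y' : Fin n → X, R y * R y' * ∏ ℓ, A (y ℓ) (y' ℓ) := by
  classical
  set B : (Fin n → X) → (Fin n → X) → ℝ := fun y y' => ∏ ℓ, A (y ℓ) (y' ℓ) with hB_def
  have hsym : ∀ a b : X, A a b = A b a := fun a b => ((hA.1.apply a b).symm).trans (star_trivial _)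
  set Pn : (Fin n → X) → ℝ := fun y => ∏ ℓ, P (y ℓ) with hPn_def
  -- (ii) row sums against Pn
  have row : ∀ y : Fin n → X, q ^ n ≤ ∑ y', Pn y' * B y y' := by
    intro y
    have h1 : ∑ y' : Fin n → X, Pn y' * B y y'
        = ∏ ℓ, ∑ a' : X, A (y ℓ) a' * P a' := by
      rw [show (∏ ℓ, ∑ a' : X, A (y ℓ) a' * P a')
          = ∑ y' : Fin n → X, ∏ ℓ, A (y ℓ) (y' ℓ) * P (y' ℓ) from
        Fintype.prod_sum fun ℓ a' => A (y ℓ) a' * P a']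
      exact Finset.sum_congr rfl fun y' _ => by
        rw [hPn_def, hB_def]; simp only []; rw [Finset.prod_mul_distrib]; ring
    rw [h1]
    calc q ^ n = ∏ _ℓ : Fin n, q := by rw [Finset.prod_const]; simp
      _ ≤ ∏ ℓ, ∑ a' : X, A (y ℓ) a' * P a' :=
          Finset.prod_le_prod (fun _ _ => hq0) (fun ℓ _ => hmin (y ℓ))
  -- Pn is a prob distribution
  have hPn1 : ∑ y, Pn y = 1 := by
    rw [hPn_def, ← Fintype.prod_sum fun _ℓ a => P a]
    simp [hP1]
  have hPn0 : ∀ y, 0 ≤ Pn y := fun y => Finset.prod_nonneg fun ℓ _ => hP0 _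
  -- (iii) quadratic form at Pn equals q^n
  have diagq : ∑ y, ∑ y', Pn y * Pn y' * B y y' = q ^ n := by
    have h2 : ∀ y : Fin n → X, ∑ y', Pn y * Pn y' * B y y'
        = Pn y * ∏ ℓ, ∑ a' : X, A (y ℓ) a' * P a' := by
      intro y
      rw [show (∏ ℓ, ∑ a' : X, A (y ℓ) a' * P a')
          = ∑ y' : Fin n → X, ∏ ℓ, A (y ℓ) (y' ℓ) * P (y' ℓ) from
        Fintype.prod_sum fun ℓ a' => A (y ℓ) a' * P a', Finset.mul_sum]
      exact Finset.sum_congr rfl fun y' _ => by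
        rw [hPn_def, hB_def]; simp only []; rw [Finset.prod_mul_distrib]; ring
    simp_rw [h2]
    have h3 : ∀ y : Fin n → X, Pn y * ∏ ℓ, ∑ a' : X, A (y ℓ) a' * P a'
        = ∏ ℓ, (P (y ℓ) * ∑ a' : X, A (y ℓ) a' * P a') := by
      intro y; rw [Finset.prod_mul_distrib]
    simp_rw [h3]
    rw [← Fintype.prod_sum fun ℓ a => P a * ∑ a' : X, A a a' * P a']
    rw [Finset.prod_const]
    have h4 : ∑ a : X, (P a * ∑ a' : X, A a a' * P a') = q := by
      rw [← hqP]
      exact Finset.sum_congr rfl fun a _ => by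
        rw [Finset.mul_sum]
        exact Finset.sum_congr rfl fun a' _ => by ring
    rw [h4]; simp
  -- symmetry of B
  have hBsym : ∀ y y' : Fin n → X, B y y' = B y' y := fun y y' =>
    Finset.prod_congr rfl fun ℓ _ => hsym _ _
  -- expand (R - Pn) quadratic form
  have hpsd : (0:ℝ) ≤ ∑ y, ∑ y', (R y - Pn y) * (R y' - Pn y') * B y y' :=
    tensor_psd_s11 hA (fun y => R y - Pn y)
  have expand : (∑ y, ∑ y', (R y - Pn y) * (R y' - Pn y') * B y y')
      = (∑ y, ∑ y', R y * R y' * B y y') - (∑ y, ∑ y', R y * Pn y' * B y y')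
        - (∑ y, ∑ y', Pn y * R y' * B y y') + ∑ y, ∑ y', Pn y * Pn y' * B y y' := by
    simp_rw [show ∀ y y' : Fin n → X, (R y - Pn y) * (R y' - Pn y') * B y y'
        = R y * R y' * B y y' - R y * Pn y' * B y y' - Pn y * R y' * B y y'
          + Pn y * Pn y' * B y y' from fun y y' => by ring,
      Finset.sum_add_distrib, Finset.sum_sub_distrib]
  have cross1 : q ^ n ≤ ∑ y, ∑ y', R y * Pn y' * B y y' := by
    calc q ^ n = ∑ y, R y * q ^ n := by rw [← Finset.sum_mul, hR1, one_mul]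
      _ ≤ ∑ y, R y * ∑ y', Pn y' * B y y' :=
          Finset.sum_le_sum fun y _ => mul_le_mul_of_nonneg_left (row y) (hR0 y)
      _ = ∑ y, ∑ y', R y * Pn y' * B y y' :=
          Finset.sum_congr rfl fun y _ => by
            rw [Finset.mul_sum]
            exact Finset.sum_congr rfl fun y' _ => by ring
  have cross2 : (∑ y, ∑ y', Pn y * R y' * B y y') = ∑ y, ∑ y', R y * Pn y' * B y y' := by
    rw [Finset.sum_comm]
    exact Finset.sum_congr rfl fun u _ => Finset.sum_congr rfl fun v _ => by
      rw [hBsym v u]; ring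
  show q ^ n ≤ ∑ y, ∑ y', R y * R y' * B y y'
  rw [expand] at hpsd
  linarith [hpsd, cross1, cross2, diagq]


lemma inner_psi {X : Type} [Fintype X] {d n : ℕ} (φ : X → EuclideanSpace ℂ (Fin d))
    (u v : Fin n → X) (ψu ψv : EuclideanSpace ℂ (Fin n → Fin d))
    (hu : ψu = WithLp.toLp 2 (fun w => ∏ ℓ, φ (u ℓ) (w ℓ))) (hv : ψv = WithLp.toLp 2 (fun w => ∏ ℓ, φ (v ℓ) (w ℓ))) :
    (inner ℂ ψu ψv : ℂ) = ∏ ℓ, (inner ℂ (φ (u ℓ)) (φ (v ℓ)) : ℂ) := by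
  simp only [PiLp.inner_apply, RCLike.inner_apply', hu, hv, PiLp.toLp_apply]
  rw [show (∏ ℓ, ∑ m, (starRingEnd ℂ) (φ (u ℓ) m) * φ (v ℓ) m)
      = ∑ w : Fin n → Fin d, ∏ ℓ, (starRingEnd ℂ) (φ (u ℓ) (w ℓ)) * φ (v ℓ) (w ℓ) from
    Fintype.prod_sum fun ℓ m => (starRingEnd ℂ) (φ (u ℓ) m) * φ (v ℓ) m]
  exact Finset.sum_congr rfl fun w _ => by
    rw [map_prod, ← Finset.prod_mul_distrib]

lemma basis_inner_expand {E : Type} [NormedAddCommGroup E] [InnerProductSpace ℂ E]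
    {ι : Type} [Fintype ι] [DecidableEq ι] (b : OrthonormalBasis ι ℂ E) (x y : E) :
    (inner ℂ x y : ℂ) = ∑ k, (starRingEnd ℂ) (inner ℂ (b k) x : ℂ) * (inner ℂ (b k) y : ℂ) := by
  rw [← b.repr.inner_map_map x y]
  simp only [PiLp.inner_apply, RCLike.inner_apply', OrthonormalBasis.repr_apply_apply]

lemma basis_parseval {E : Type} [NormedAddCommGroup E] [InnerProductSpace ℂ E]
    {ι : Type} [Fintype ι] [DecidableEq ι] (b : OrthonormalBasis ι ℂ E) (x : E) :
    ∑ k, ‖(inner ℂ (b k) x : ℂ)‖^2 = ‖x‖^2 := by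
  have h := b.repr.norm_map x
  rw [← h, EuclideanSpace.norm_eq, Real.sq_sqrt (by positivity)]
  simp [OrthonormalBasis.repr_apply_apply]

lemma norm_one_of_inner_one {E : Type} [NormedAddCommGroup E] [InnerProductSpace ℂ E]
    (x : E) (h : (inner ℂ x x : ℂ) = 1) : ‖x‖ = 1 := by
  rw [inner_self_eq_norm_sq_to_K] at h
  have h2 : ((‖x‖^2 : ℝ) : ℂ) = ((1:ℝ):ℂ) := by push_cast; simpa using h
  have := Complex.ofReal_injective h2
  nlinarith [norm_nonneg x]

lemma ncard_filter_le {M L : ℕ} (p : Fin M → Prop) [DecidablePred p]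
    (h : {i | p i}.ncard ≤ L) : (Finset.univ.filter p).card ≤ L := by
  rwa [show {i | p i}.ncard = (Finset.univ.filter p).card from by
    rw [Set.ncard_eq_toFinset_card']; simp] at h

theorem stmt11 (X : Type) [Fintype X] [Nonempty X]
    (A : Matrix X X ℝ) (hA : A.PosSemidef)
    (hrange : ∀ x x', 0 ≤ A x x' ∧ A x x' ≤ 1) (hdiag : ∀ x, A x x = 1)
    (d n M L : ℕ)
    (φ : X → EuclideanSpace ℂ (Fin d)) (hφ : ∀ x, ‖φ x‖ = 1)
    (hover : ∀ x x', A x x' ≤ ‖(inner ℂ (φ x) (φ x') : ℂ)‖)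
    (x : Fin M → Fin n → X)
    (ψ : Fin M → EuclideanSpace ℂ (Fin n → Fin d))
    (hψ : ∀ i, ψ i = WithLp.toLp 2 (fun v => ∏ ℓ, φ (x i ℓ) (v ℓ)))
    (b : OrthonormalBasis (Fin n → Fin d) ℂ (EuclideanSpace ℂ (Fin n → Fin d)))
    (hsupp : ∀ k, {i | (inner ℂ (b k) (ψ i) : ℂ) ≠ 0}.ncard ≤ L) :
    (M : ℝ) ≤ (L : ℝ) * (sInf {v : ℝ | ∃ P : X → ℝ, (∀ a, 0 ≤ P a) ∧ ∑ a, P a = 1 ∧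
        v = ∑ a, ∑ a', P a * P a' * A a a'})⁻¹ ^ n := by
  classical
  set q : ℝ := sInf {v : ℝ | ∃ P : X → ℝ, (∀ a, 0 ≤ P a) ∧ ∑ a, P a = 1 ∧
        v = ∑ a, ∑ a', P a * P a' * A a a'} with hq_def
  obtain ⟨P, hP0, hP1, hPmin, hPkkt⟩ := exists_minimizer A hA
  have hmemS : (∑ a, ∑ a', P a * P a' * A a a') ∈ {v : ℝ | ∃ P : X → ℝ, (∀ a, 0 ≤ P a) ∧
      ∑ a, P a = 1 ∧ v = ∑ a, ∑ a', P a * P a' * A a a'} := ⟨P, hP0, hP1, rfl⟩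
  have hlb : ∀ v ∈ {v : ℝ | ∃ P : X → ℝ, (∀ a, 0 ≤ P a) ∧ ∑ a, P a = 1 ∧
      v = ∑ a, ∑ a', P a * P a' * A a a'}, (∑ a, ∑ a', P a * P a' * A a a') ≤ v := by
    rintro v ⟨Q, hQ0, hQ1, rfl⟩; exact hPmin Q hQ0 hQ1
  have hqfP : q = ∑ a, ∑ a', P a * P a' * A a a' :=
    le_antisymm (csInf_le ⟨_, hlb⟩ hmemS) (le_csInf ⟨_, hmemS⟩ hlb)
  -- positivity of q
  have hq_pos : 0 < q := by
    rw [hqfP]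
    have h1 : ∑ a, P a ^ 2 ≤ ∑ a, ∑ a', P a * P a' * A a a' := by
      apply Finset.sum_le_sum; intro a _
      have h := Finset.single_le_sum (f := fun a' => P a * P a' * A a a')
        (fun a' _ => mul_nonneg (mul_nonneg (hP0 a) (hP0 a')) (hrange a a').1)
        (Finset.mem_univ a)
      have h' : P a * P a * A a a ≤ ∑ a', P a * P a' * A a a' := h
      rw [hdiag a] at h'; nlinarith [h']
    have h2 : (1:ℝ) ≤ (Fintype.card X : ℝ) * ∑ a, P a ^ 2 := by
      have h := sq_sum_le_card_mul_sum_sq (s := (Finset.univ : Finset X)) (f := P)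
      rw [hP1] at h; simpa using h
    have hcard : 0 < (Fintype.card X : ℝ) := by
      exact_mod_cast Fintype.card_pos
    nlinarith
  -- inner products of the ψ's
  have hinner : ∀ i j, (inner ℂ (ψ i) (ψ j) : ℂ) = ∏ ℓ, (inner ℂ (φ (x i ℓ)) (φ (x j ℓ)) : ℂ) :=
    fun i j => inner_psi φ (x i) (x j) _ _ (hψ i) (hψ j)
  have hnorm1 : ∀ i, ‖ψ i‖ = 1 := by
    intro i
    apply norm_one_of_inner_one
    rw [hinner i i]
    apply Finset.prod_eq_one; intro ℓ _
    rw [inner_self_eq_norm_sq_to_K, hφ]; norm_num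
  -- T1 : products of A bound inner product norms below
  have T1 : ∑ i, ∑ j, (∏ ℓ, A (x i ℓ) (x j ℓ)) ≤ ∑ i, ∑ j, ‖(inner ℂ (ψ i) (ψ j) : ℂ)‖ := by
    apply Finset.sum_le_sum; intro i _; apply Finset.sum_le_sum; intro j _
    rw [hinner i j, norm_prod]
    exact Finset.prod_le_prod (fun ℓ _ => (hrange _ _).1) (fun ℓ _ => hover _ _)
  -- T2 : overlap sum is at most L * M
  have T2 : ∑ i, ∑ j, ‖(inner ℂ (ψ i) (ψ j) : ℂ)‖ ≤ (L:ℝ) * M := by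
    set c : (Fin n → Fin d) → Fin M → ℝ := fun k i => ‖(inner ℂ (b k) (ψ i) : ℂ)‖ with hc_def
    have step1 : ∀ i j, ‖(inner ℂ (ψ i) (ψ j) : ℂ)‖ ≤ ∑ k, c k i * c k j := by
      intro i j
      rw [basis_inner_expand b (ψ i) (ψ j)]
      refine (norm_sum_le _ _).trans (le_of_eq (Finset.sum_congr rfl fun k _ => ?_))
      rw [norm_mul, RCLike.norm_conj]
    have step3 : (∑ i, ∑ j, ∑ k : Fin n → Fin d, c k i * c k j) = ∑ k, (∑ i, c k i)^2 := by
      rw [show (∑ i, ∑ j, ∑ k : Fin n → Fin d, c k i * c k j)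
          = ∑ i, ∑ k : Fin n → Fin d, ∑ j, c k i * c k j from
        Finset.sum_congr rfl fun _ _ => Finset.sum_comm, Finset.sum_comm]
      exact Finset.sum_congr rfl fun k _ => by rw [sq, Finset.sum_mul_sum]
    have step4 : ∀ k, (∑ i, c k i)^2 ≤ (L:ℝ) * ∑ i, c k i ^ 2 := by
      intro k
      have hTcard : (Finset.univ.filter fun i => (inner ℂ (b k) (ψ i) : ℂ) ≠ 0).card ≤ L :=
        ncard_filter_le _ (hsupp k)
      have hzero : ∑ i, c k i
          = ∑ i ∈ Finset.univ.filter (fun i => (inner ℂ (b k) (ψ i) : ℂ) ≠ 0), c k i := by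
        symm
        apply Finset.sum_subset (Finset.filter_subset _ _)
        intro i _ hi
        simp only [Finset.mem_filter, Finset.mem_univ, true_and, not_not] at hi
        show ‖(inner ℂ (b k) (ψ i) : ℂ)‖ = 0
        rw [hi, norm_zero]
      rw [hzero]
      calc (∑ i ∈ Finset.univ.filter (fun i => (inner ℂ (b k) (ψ i) : ℂ) ≠ 0), c k i)^2
          ≤ (Finset.univ.filter fun i => (inner ℂ (b k) (ψ i) : ℂ) ≠ 0).card
            * ∑ i ∈ Finset.univ.filter (fun i => (inner ℂ (b k) (ψ i) : ℂ) ≠ 0), c k i ^ 2 :=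
            sq_sum_le_card_mul_sum_sq
        _ ≤ (L:ℝ) * ∑ i, c k i ^ 2 := by
            apply mul_le_mul (by exact_mod_cast hTcard)
              (Finset.sum_le_sum_of_subset_of_nonneg (Finset.subset_univ _)
                (fun i _ _ => sq_nonneg _))
              (Finset.sum_nonneg fun i _ => sq_nonneg _) (by positivity)
    calc ∑ i, ∑ j, ‖(inner ℂ (ψ i) (ψ j) : ℂ)‖
        ≤ ∑ i, ∑ j, ∑ k : Fin n → Fin d, c k i * c k j :=
          Finset.sum_le_sum fun i _ => Finset.sum_le_sum fun j _ => step1 i j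
      _ = ∑ k, (∑ i, c k i)^2 := step3
      _ ≤ ∑ k : Fin n → Fin d, (L:ℝ) * ∑ i, c k i ^ 2 :=
          Finset.sum_le_sum fun k _ => step4 k
      _ = (L:ℝ) * ∑ i, ∑ k : Fin n → Fin d, c k i ^ 2 := by
          rw [← Finset.mul_sum, Finset.sum_comm]
      _ = (L:ℝ) * M := by
          rw [show (∑ i, ∑ k : Fin n → Fin d, c k i ^ 2) = ∑ i : Fin M, (1:ℝ) from
            Finset.sum_congr rfl fun i _ => by
              rw [show (∑ k : Fin n → Fin d, c k i ^ 2) = ‖ψ i‖^2 from basis_parseval b (ψ i),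
                hnorm1 i]; norm_num]
          simp
  -- T3 : lower bound via the minimizing distribution
  rcases Nat.eq_zero_or_pos M with hM | hM
  · subst hM
    simp only [Nat.cast_zero]
    exact mul_nonneg (Nat.cast_nonneg L) (pow_nonneg (inv_nonneg.mpr hq_pos.le) n)
  have hMR : (0:ℝ) < M := by exact_mod_cast hM
  set N : (Fin n → X) → ℝ := fun y => ((Finset.univ.filter fun i => x i = y).card : ℝ)
    with hN_def
  have hfib : ∀ g : (Fin n → X) → ℝ, ∑ i, g (x i) = ∑ y, N y * g y := by
    intro g
    rw [← Finset.sum_fiberwise' Finset.univ x g]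
    exact Finset.sum_congr rfl fun y _ => by
      rw [Finset.sum_const, nsmul_eq_mul, hN_def]
  have hNsum : ∑ y, N y = M := by
    have h := hfib (fun _ => (1:ℝ))
    simp only [mul_one] at h
    rw [← h]; simp
  have hN0 : ∀ y, 0 ≤ N y := fun y => by rw [hN_def]; positivity
  have hfib2 : ∑ i, ∑ j, (∏ ℓ, A (x i ℓ) (x j ℓ))
      = ∑ y, ∑ y', N y * N y' * ∏ ℓ, A (y ℓ) (y' ℓ) := by
    rw [hfib (fun y => ∑ j, ∏ ℓ, A (y ℓ) (x j ℓ))]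
    · apply Finset.sum_congr rfl; intro y _
      rw [show (∑ j, ∏ ℓ, A (y ℓ) (x j ℓ)) = ∑ y', N y' * ∏ ℓ, A (y ℓ) (y' ℓ) from
        hfib (fun y' => ∏ ℓ, A (y ℓ) (y' ℓ)), Finset.mul_sum]
      exact Finset.sum_congr rfl fun y' _ => by ring
  have T3 : (M:ℝ)^2 * q^n ≤ ∑ i, ∑ j, (∏ ℓ, A (x i ℓ) (x j ℓ)) := by
    have hq := qn_le_form hA hq_pos.le P hP0 hP1 hqfP.symm
      (fun x0 => hqfP ▸ hPkkt x0) (fun y => N y / M)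
      (fun y => div_nonneg (hN0 y) hMR.le)
      (by rw [← Finset.sum_div, hNsum, div_self (ne_of_gt hMR)])
    rw [hfib2]
    have heq : (M:ℝ)^2 * ∑ y, ∑ y', (N y / M) * (N y' / M) * ∏ ℓ, A (y ℓ) (y' ℓ)
        = ∑ y, ∑ y', N y * N y' * ∏ ℓ, A (y ℓ) (y' ℓ) := by
      rw [Finset.mul_sum]
      apply Finset.sum_congr rfl; intro y _
      rw [Finset.mul_sum]
      apply Finset.sum_congr rfl; intro y' _
      field_simp
    have hq' : q^n ≤ ∑ y, ∑ y', (N y / M) * (N y' / M) * ∏ ℓ, A (y ℓ) (y' ℓ) := hq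
    rw [← heq]
    have h2 : (0:ℝ) ≤ (M:ℝ)^2 := sq_nonneg _
    nlinarith [hq']
  -- combine
  have hqn : 0 < q ^ n := pow_pos hq_pos n
  have hfinal : (M:ℝ) * q^n ≤ (L:ℝ) := by nlinarith [T1, T2, T3]
  rw [inv_pow, ← div_eq_mul_inv, le_div_iff₀ hqn]
  exact hfinal
end
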